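/- arXiv:2410.05504 — 4 statements merged into one kernel-verified Lean document; each statement's English description precedes it below -/
import Mathlib

section
/- No benefit with binary actions: If the action set A has exactly two elements, then for every obedient ambiguous experiment (σ, μ) one has U_s(σ, μ, τ*) ≤ u_s^BP; that is, the sender cannot benefit from ambiguous communication. -/
open Finset

/-- A stochastic kernel from `X` to `Y`: each row `k x` is a probability vector on `Y`.
An experiment is a kernel from states `Ω` to messages; a receiver strategy is a kernel
from messages to actions `A`. -/
def IsKernel {X Y : Type*} [Fintype Y] (k : X → Y → ℝ) : Prop :=
  (∀ x y, 0 ≤ k x y) ∧ ∀ x, ∑ y, k x y = 1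

/-- A probability vector on a finite type. -/
def IsProb {Θ : Type*} [Fintype Θ] (μ : Θ → ℝ) : Prop :=
  (∀ θ, 0 ≤ μ θ) ∧ ∑ θ, μ θ = 1

/-- The obedient strategy `τ*`: take the recommended action with probability one. -/
noncomputable def tauStar {A : Type*} [DecidableEq A] : A → A → ℝ :=
  fun m a => if a = m then (1 : ℝ) else 0

/-- Expected payoff `u_i(σ, τ) = ∑_{ω,m,a} p(ω) σ(m|ω) τ(a|m) u_i(a,ω)`. -/
noncomputable def expPayoff {Ω M A : Type*} [Fintype Ω] [Fintype M] [Fintype A]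
    (p : Ω → ℝ) (u : A → Ω → ℝ) (σ : Ω → M → ℝ) (τ : M → A → ℝ) : ℝ :=
  ∑ ω, ∑ m, ∑ a, p ω * σ ω m * τ m a * u a ω

/-- Obedience of a single (unambiguous) canonical experiment: `τ*` is a best reply. -/
def Obedient {Ω A : Type*} [Fintype Ω] [Fintype A] [DecidableEq A]
    (p : Ω → ℝ) (ur : A → Ω → ℝ) (σ : Ω → A → ℝ) : Prop :=
  ∀ τ : A → A → ℝ, IsKernel τ → expPayoff p ur σ τ ≤ expPayoff p ur σ tauStar

/-- Obedience of an ambiguous experiment `(σ, μ)` for a smooth-ambiguity receiver with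
index `φr`:  `τ*` maximizes `τ ↦ U_r(σ, μ, τ) = φr⁻¹(∑_θ μ_θ φr(u_r(σ_θ, τ)))`; since `φr`
is strictly increasing this is equivalent to `τ*` maximizing `τ ↦ ∑_θ μ_θ φr(u_r(σ_θ, τ))`. -/
def AmbObedient {Ω A Θ : Type*} [Fintype Ω] [Fintype A] [DecidableEq A] [Fintype Θ]
    (φr : ℝ → ℝ) (p : Ω → ℝ) (ur : A → Ω → ℝ) (σ : Θ → Ω → A → ℝ) (μ : Θ → ℝ) : Prop :=
  ∀ τ : A → A → ℝ, IsKernel τ →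
    ∑ θ, μ θ * φr (expPayoff p ur (σ θ) τ) ≤ ∑ θ, μ θ * φr (expPayoff p ur (σ θ) tauStar)

/-- A smooth ambiguity index: strictly increasing, concave, differentiable. -/
def SmoothIndex (φ : ℝ → ℝ) : Prop :=
  StrictMono φ ∧ ConcaveOn ℝ Set.univ φ ∧ Differentiable ℝ φ

/-- Two experiments are (strictly) Pareto ranked: under obedience, sender and receiver
strictly rank them the same way. -/
def ParetoRanked {Ω A : Type*} [Fintype Ω] [Fintype A] [DecidableEq A]
    (p : Ω → ℝ) (us ur : A → Ω → ℝ) (σ σ' : Ω → A → ℝ) : Prop :=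
  (expPayoff p us σ' tauStar < expPayoff p us σ tauStar ∧
      expPayoff p ur σ' tauStar < expPayoff p ur σ tauStar) ∨
  (expPayoff p us σ tauStar < expPayoff p us σ' tauStar ∧
      expPayoff p ur σ tauStar < expPayoff p ur σ' tauStar)

/-- Two experiments are weakly Pareto ranked. -/
def WeaklyParetoRanked {Ω A : Type*} [Fintype Ω] [Fintype A] [DecidableEq A]
    (p : Ω → ℝ) (us ur : A → Ω → ℝ) (σ σ' : Ω → A → ℝ) : Prop :=
  (expPayoff p us σ' tauStar ≤ expPayoff p us σ tauStar ∧
      expPayoff p ur σ' tauStar ≤ expPayoff p ur σ tauStar) ∨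
  (expPayoff p us σ tauStar ≤ expPayoff p us σ' tauStar ∧
      expPayoff p ur σ tauStar ≤ expPayoff p ur σ' tauStar)

/-- Pointwise convex combination of two experiments. -/
noncomputable def mixExp {Ω A : Type*} (lam : ℝ) (σ1 σ2 : Ω → A → ℝ) : Ω → A → ℝ :=
  fun ω a => lam * σ1 ω a + (1 - lam) * σ2 ω a

/-- `(σbar, σlo, lam)` is a Pareto-ranked splitting of the experiment `σ`. -/
def ParetoRankedSplitting {Ω A : Type*} [Fintype Ω] [Fintype A] [DecidableEq A]
    (p : Ω → ℝ) (us ur : A → Ω → ℝ) (σbar σlo : Ω → A → ℝ) (lam : ℝ) (σ : Ω → A → ℝ) : Prop :=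
  IsKernel σbar ∧ IsKernel σlo ∧ lam ∈ Set.Ioo (0 : ℝ) 1 ∧
    mixExp lam σbar σlo = σ ∧ ParetoRanked p us ur σbar σlo

/-- The `((σbar, σlo), lam)`-probability premium of a player with utility `u` and index `φ`. -/
noncomputable def probPremium {Ω A : Type*} [Fintype Ω] [Fintype A] [DecidableEq A]
    (p : Ω → ℝ) (u : A → Ω → ℝ) (φ : ℝ → ℝ) (σbar σlo : Ω → A → ℝ) (lam : ℝ) : ℝ :=
  (φ (expPayoff p u (mixExp lam σbar σlo) tauStar) -
      lam * φ (expPayoff p u σbar tauStar) - (1 - lam) * φ (expPayoff p u σlo tauStar)) /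
    (φ (expPayoff p u σbar tauStar) - φ (expPayoff p u σlo tauStar))

/-- The set of `φs`-transformed sender values attainable by obedient ambiguous experiments;
the value of the sender's problem `(P)` equals `u` iff `φs u` is the least upper bound of
this set (since `φs` is continuous and strictly increasing). -/
def senderValues {Ω A : Type*} [Fintype Ω] [Fintype A] [DecidableEq A]
    (φs φr : ℝ → ℝ) (p : Ω → ℝ) (us ur : A → Ω → ℝ) : Set ℝ :=
  {x | ∃ (n : ℕ) (σ : Fin n → Ω → A → ℝ) (μ : Fin n → ℝ),
    (∀ j, IsKernel (σ j)) ∧ IsProb μ ∧ AmbObedient φr p ur σ μ ∧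
    x = ∑ j, μ j * φs (expPayoff p us (σ j) tauStar)}

/-- The set of feasible values of the auxiliary program `(Φ*(u))`: sums
`∑_θ λ_θ Φ_u(σ_θ)` over splittings `(λ_θ, σ_θ)` of obedient experiments, where
`Φ_u(σ) = (φs(u_s(σ,τ*)) − φs(u)) / φr'(u_r(σ,τ*))`. -/
def phiProgram {Ω A : Type*} [Fintype Ω] [Fintype A] [DecidableEq A]
    (φs φr : ℝ → ℝ) (p : Ω → ℝ) (us ur : A → Ω → ℝ) (u : ℝ) : Set ℝ :=
  {x | ∃ (n : ℕ) (σ : Fin n → Ω → A → ℝ) (lam : Fin n → ℝ),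
    (∀ j, IsKernel (σ j)) ∧ IsProb lam ∧
    Obedient p ur (fun ω a => ∑ j, lam j * σ j ω a) ∧
    x = ∑ j, lam j * ((φs (expPayoff p us (σ j) tauStar) - φs u) /
      deriv φr (expPayoff p ur (σ j) tauStar))}

section AuxNoBenefit
open Filter Topology Set

lemma aux_deriv_nonneg_right {F : ℝ → ℝ} {L : ℝ} (hF : HasDerivAt F L 1)
    (h : ∀ x ∈ Set.Icc (0:ℝ) 1, F x ≤ F 1) : 0 ≤ L := by
  have hs : Tendsto (slope F 1) (𝓝[<] (1:ℝ)) (𝓝 L) :=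
    (hasDerivAt_iff_tendsto_slope.mp hF).mono_left
      (nhdsWithin_mono _ (fun y hy => ne_of_lt hy))
  refine ge_of_tendsto hs ?_
  filter_upwards [Ioo_mem_nhdsLT_of_mem (Set.mem_Ioc.mpr ⟨zero_lt_one, le_refl (1:ℝ)⟩)] with y hy
  rw [slope_def_field]
  exact div_nonneg_of_nonpos (sub_nonpos.mpr (h y ⟨hy.1.le, hy.2.le⟩))
    (by linarith [hy.2])

lemma aux_deriv_nonpos_left {F : ℝ → ℝ} {L : ℝ} (hF : HasDerivAt F L 0)
    (h : ∀ x ∈ Set.Icc (0:ℝ) 1, F x ≤ F 0) : L ≤ 0 := by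
  have hs : Tendsto (slope F 0) (𝓝[>] (0:ℝ)) (𝓝 L) :=
    (hasDerivAt_iff_tendsto_slope.mp hF).mono_left
      (nhdsWithin_mono _ (fun y hy => ne_of_gt hy))
  refine le_of_tendsto hs ?_
  filter_upwards [Ioo_mem_nhdsGT_of_mem (Set.mem_Ico.mpr ⟨le_refl (0:ℝ), zero_lt_one⟩)] with y hy
  rw [slope_def_field]
  exact div_nonpos_iff.mpr (Or.inr ⟨sub_nonpos.mpr (h y ⟨hy.1.le, hy.2.le⟩), by linarith [hy.1]⟩)

lemma aux_chebyshev {ι : Type*} [Fintype ι] (μ w z : ι → ℝ)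
    (hμ0 : ∀ i, 0 ≤ μ i) (hμ1 : ∑ i, μ i = 1)
    (h : ∀ i j, (w i - w j) * (z i - z j) ≤ 0) :
    ∑ i, μ i * (w i * z i) ≤ (∑ i, μ i * w i) * (∑ i, μ i * z i) := by
  have key : ∑ i, ∑ j, μ i * μ j * ((w i - w j) * (z i - z j)) ≤ 0 :=
    Finset.sum_nonpos fun i _ => Finset.sum_nonpos fun j _ =>
      mul_nonpos_of_nonneg_of_nonpos (mul_nonneg (hμ0 i) (hμ0 j)) (h i j)
  have hterm : ∀ i j : ι, μ i * μ j * ((w i - w j) * (z i - z j)) =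
      ((μ i * (w i * z i)) * μ j - (μ i * w i) * (μ j * z j))
        + ((μ j * (w j * z j)) * μ i - (μ j * w j) * (μ i * z i)) := by
    intro i j; ring
  have hA : ∀ g : ι → ι → ℝ, (∀ i j, g i j = ((μ i * (w i * z i)) * μ j - (μ i * w i) * (μ j * z j))) →
      ∑ i, ∑ j, g i j = (∑ i, μ i * (w i * z i)) - (∑ i, μ i * w i) * (∑ i, μ i * z i) := by
    intro g hg
    have : ∀ i : ι, ∑ j, g i j = μ i * (w i * z i) - (μ i * w i) * (∑ j, μ j * z j) := by
      intro i
      simp only [hg, Finset.sum_sub_distrib, ← Finset.mul_sum, hμ1, mul_one]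
    simp only [this, Finset.sum_sub_distrib, ← Finset.sum_mul]
  have e1 := hA (fun i j => (μ i * (w i * z i)) * μ j - (μ i * w i) * (μ j * z j)) (fun _ _ => rfl)
  have e2 : ∑ i, ∑ j, ((μ j * (w j * z j)) * μ i - (μ j * w j) * (μ i * z i))
      = (∑ i, μ i * (w i * z i)) - (∑ i, μ i * w i) * (∑ i, μ i * z i) := by
    rw [Finset.sum_comm]
    exact hA _ (fun _ _ => rfl)
  have expand : ∑ i, ∑ j, μ i * μ j * ((w i - w j) * (z i - z j))
      = 2 * ((∑ i, μ i * (w i * z i)) - (∑ i, μ i * w i) * (∑ i, μ i * z i)) := by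
    simp only [hterm, Finset.sum_add_distrib, e1, e2]; ring
  rw [expand] at key
  linarith

lemma aux_deriv_pos {φ : ℝ → ℝ} (hmono : StrictMono φ) (hconc : ConcaveOn ℝ Set.univ φ)
    (hdiff : Differentiable ℝ φ) (t : ℝ) : 0 < deriv φ t := by
  have hanti : AntitoneOn (deriv φ) Set.univ :=
    hconc.antitoneOn_deriv (fun x _ => (hdiff x))
  obtain ⟨c, hc, hceq⟩ := exists_hasDerivAt_eq_slope φ (deriv φ) (show t < t + 1 by linarith)
    hdiff.continuous.continuousOn (fun x _ => (hdiff x).hasDerivAt)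
  have hcpos : 0 < deriv φ c := by
    rw [hceq]
    have : φ t < φ (t + 1) := hmono (by linarith)
    have h1 : t + 1 - t = 1 := by ring
    rw [h1, div_one]
    linarith
  exact lt_of_lt_of_le hcpos (hanti (Set.mem_univ _) (Set.mem_univ _) hc.1.le)

end AuxNoBenefit

/-- Corollary 1: if there are exactly two actions, no obedient ambiguous
experiment benefits the sender: `U_s(σ, μ, τ*) ≤ u_s^BP` (stated via the strictly
increasing `φs`). -/
theorem no_benefit_with_binary_actions
    {Ω A : Type*} [Fintype Ω] [Fintype A] [DecidableEq A]
    (hA : Fintype.card A = 2)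
    (p : Ω → ℝ) (hp : IsProb p) (us ur : A → Ω → ℝ)
    (φs φr : ℝ → ℝ) (hφs : SmoothIndex φs) (hφr : SmoothIndex φr)
    (usBP : ℝ)
    (husBP : IsGreatest {x : ℝ | ∃ σ0 : Ω → A → ℝ,
      IsKernel σ0 ∧ Obedient p ur σ0 ∧ x = expPayoff p us σ0 tauStar} usBP)
    (Θ : Type*) [Fintype Θ]
    (σ : Θ → Ω → A → ℝ) (hσ : ∀ θ, IsKernel (σ θ)) (μ : Θ → ℝ) (hμ : IsProb μ)
    (hobed : AmbObedient φr p ur σ μ) :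
    ∑ θ, μ θ * φs (expPayoff p us (σ θ) tauStar) ≤ φs usBP := by
    classical
  obtain ⟨a0, a1, hne, huniv⟩ := Finset.card_eq_two.mp hA
  have hcases : ∀ a : A, a = a0 ∨ a = a1 := by
    intro a
    have : a ∈ (Finset.univ : Finset A) := Finset.mem_univ a
    rw [huniv] at this
    simpa using this
  have sumA : ∀ f : A → ℝ, ∑ a, f a = f a0 + f a1 := by
    intro f; rw [show (Finset.univ : Finset A) = {a0, a1} from huniv, Finset.sum_pair hne]
  have hexp : ∀ (u : A → Ω → ℝ) (σ0 : Ω → A → ℝ) (τ : A → A → ℝ),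
      expPayoff p u σ0 τ = ∑ ω, (p ω * σ0 ω a0 * τ a0 a0 * u a0 ω
        + p ω * σ0 ω a0 * τ a0 a1 * u a1 ω
        + p ω * σ0 ω a1 * τ a1 a0 * u a0 ω + p ω * σ0 ω a1 * τ a1 a1 * u a1 ω) := by
    intro u σ0 τ
    unfold expPayoff
    refine Finset.sum_congr rfl fun ω _ => ?_
    rw [sumA, sumA, sumA]
    ring
  have hstar : ∀ (u : A → Ω → ℝ) (σ0 : Ω → A → ℝ),
      expPayoff p u σ0 tauStar = ∑ ω, (p ω * σ0 ω a0 * u a0 ω + p ω * σ0 ω a1 * u a1 ω) := by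
    intro u σ0
    rw [hexp]
    refine Finset.sum_congr rfl fun ω _ => ?_
    simp [tauStar, hne, hne.symm]
  set K0 : ℝ := ∑ ω, p ω * ur a0 ω with hK0
  set K1 : ℝ := ∑ ω, p ω * ur a1 ω with hK1
  have hrow : ∀ θ ω, σ θ ω a0 + σ θ ω a1 = 1 := by
    intro θ ω
    have := (hσ θ).2 ω; rwa [sumA] at this
  set v : Θ → ℝ := fun θ => expPayoff p ur (σ θ) tauStar with hv
  have hmaster : ∀ θ (τ : A → A → ℝ), (τ a0 a0 + τ a0 a1 = 1) → (τ a1 a0 + τ a1 a1 = 1) →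
      expPayoff p ur (σ θ) τ = K0 + τ a1 a1 * (v θ - K0) + τ a0 a1 * (K1 - v θ) := by
    intro θ τ h0 h1
    have hv' : v θ = ∑ ω, (p ω * σ θ ω a0 * ur a0 ω + p ω * σ θ ω a1 * ur a1 ω) :=
      hstar ur (σ θ)
    rw [hexp, hv', hK0, hK1, ← Finset.sum_sub_distrib, ← Finset.sum_sub_distrib,
      Finset.mul_sum, Finset.mul_sum, ← Finset.sum_add_distrib, ← Finset.sum_add_distrib]
    refine Finset.sum_congr rfl fun ω _ => ?_
    have hA0 : σ θ ω a0 = 1 - σ θ ω a1 := by linarith [hrow θ ω]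
    have h00 : τ a0 a0 = 1 - τ a0 a1 := by linarith
    have h10 : τ a1 a0 = 1 - τ a1 a1 := by linarith
    rw [hA0, h00, h10]; ring
  -- deviation at message a1
  set τd1 : ℝ → A → A → ℝ :=
    fun x m a => if m = a1 then (if a = a1 then x else 1 - x)
      else (if a = m then (1:ℝ) else 0) with hτd1
  have hτd1k : ∀ x ∈ Set.Icc (0:ℝ) 1, IsKernel (τd1 x) := by
    intro x hx
    constructor
    · intro m a
      simp only [hτd1]
      split_ifs <;> first | exact hx.1 | linarith [hx.2] | norm_num
    · intro m
      rw [sumA]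
      rcases hcases m with rfl | rfl <;> simp [hτd1, hne, hne.symm] <;> ring
  have hGpay : ∀ (x : ℝ) (θ : Θ), expPayoff p ur (σ θ) (τd1 x) = K0 + x * (v θ - K0) := by
    intro x θ
    rw [hmaster θ (τd1 x) (by simp [hτd1, hne, hne.symm]) (by simp [hτd1, hne, hne.symm])]
    simp [hτd1, hne, hne.symm]
  set G : ℝ → ℝ := fun x => ∑ θ, μ θ * φr (K0 + x * (v θ - K0)) with hG
  have hGle : ∀ x ∈ Set.Icc (0:ℝ) 1, G x ≤ G 1 := by
    intro x hx
    have h := hobed (τd1 x) (hτd1k x hx)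
    calc G x = ∑ θ, μ θ * φr (expPayoff p ur (σ θ) (τd1 x)) := by
          rw [hG]; exact Finset.sum_congr rfl fun θ _ => by rw [hGpay]
      _ ≤ ∑ θ, μ θ * φr (expPayoff p ur (σ θ) tauStar) := h
      _ = G 1 := by
          rw [hG]
          refine Finset.sum_congr rfl fun θ _ => ?_
          rw [show K0 + 1 * (v θ - K0) = v θ by ring]
  have hDer1 : HasDerivAt G (∑ θ, μ θ * (deriv φr (v θ) * (v θ - K0))) 1 := by
    rw [hG]
    refine HasDerivAt.fun_sum fun θ _ => ?_
    have hinner : HasDerivAt (fun x : ℝ => K0 + x * (v θ - K0)) (v θ - K0) 1 := by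
      simpa using ((hasDerivAt_id (1:ℝ)).mul_const (v θ - K0)).const_add K0
    have houter := (hφr.2.2 (K0 + 1 * (v θ - K0))).hasDerivAt
    have hcomp := (HasDerivAt.comp (1:ℝ) houter hinner).const_mul (μ θ)
    simpa [Function.comp, show K0 + 1 * (v θ - K0) = v θ by ring, mul_comm, mul_assoc]
      using hcomp
  have hFOC1 : 0 ≤ ∑ θ, μ θ * (deriv φr (v θ) * (v θ - K0)) :=
    aux_deriv_nonneg_right hDer1 hGle
  -- deviation at message a0
  set τd2 : ℝ → A → A → ℝ :=
    fun y m a => if m = a0 then (if a = a1 then y else 1 - y)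
      else (if a = m then (1:ℝ) else 0) with hτd2
  have hτd2k : ∀ y ∈ Set.Icc (0:ℝ) 1, IsKernel (τd2 y) := by
    intro y hy
    constructor
    · intro m a
      simp only [hτd2]
      split_ifs <;> first | exact hy.1 | linarith [hy.2] | norm_num
    · intro m
      rw [sumA]
      rcases hcases m with rfl | rfl <;> simp [hτd2, hne, hne.symm] <;> ring
  have hHpay : ∀ (y : ℝ) (θ : Θ), expPayoff p ur (σ θ) (τd2 y) = v θ + y * (K1 - v θ) := by
    intro y θ
    rw [hmaster θ (τd2 y) (by simp [hτd2, hne, hne.symm]) (by simp [hτd2, hne, hne.symm])]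
    simp [hτd2, hne, hne.symm]
  set H : ℝ → ℝ := fun y => ∑ θ, μ θ * φr (v θ + y * (K1 - v θ)) with hH
  have hHle : ∀ y ∈ Set.Icc (0:ℝ) 1, H y ≤ H 0 := by
    intro y hy
    have h := hobed (τd2 y) (hτd2k y hy)
    calc H y = ∑ θ, μ θ * φr (expPayoff p ur (σ θ) (τd2 y)) := by
          rw [hH]; exact Finset.sum_congr rfl fun θ _ => by rw [hHpay]
      _ ≤ ∑ θ, μ θ * φr (expPayoff p ur (σ θ) tauStar) := h
      _ = H 0 := by
          rw [hH]
          refine Finset.sum_congr rfl fun θ _ => ?_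
          rw [show v θ + 0 * (K1 - v θ) = v θ by ring]
  have hDer2 : HasDerivAt H (∑ θ, μ θ * (deriv φr (v θ) * (K1 - v θ))) 0 := by
    rw [hH]
    refine HasDerivAt.fun_sum fun θ _ => ?_
    have hinner : HasDerivAt (fun y : ℝ => v θ + y * (K1 - v θ)) (K1 - v θ) 0 := by
      simpa using ((hasDerivAt_id (0:ℝ)).mul_const (K1 - v θ)).const_add (v θ)
    have houter := (hφr.2.2 (v θ + 0 * (K1 - v θ))).hasDerivAt
    have hcomp := (HasDerivAt.comp (0:ℝ) houter hinner).const_mul (μ θ)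
    simpa [Function.comp, show v θ + 0 * (K1 - v θ) = v θ by ring, mul_comm, mul_assoc]
      using hcomp
  have hFOC2' : ∑ θ, μ θ * (deriv φr (v θ) * (K1 - v θ)) ≤ 0 :=
    aux_deriv_nonpos_left hDer2 hHle
  have hFOC2 : 0 ≤ ∑ θ, μ θ * (deriv φr (v θ) * (v θ - K1)) := by
    have hneg : ∑ θ, μ θ * (deriv φr (v θ) * (v θ - K1))
        = - ∑ θ, μ θ * (deriv φr (v θ) * (K1 - v θ)) := by
      rw [← Finset.sum_neg_distrib]
      exact Finset.sum_congr rfl fun θ _ => by ring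
    rw [hneg]; linarith
  -- Chebyshev step
  have hwpos : ∀ θ, 0 < deriv φr (v θ) := fun θ => aux_deriv_pos hφr.1 hφr.2.1 hφr.2.2 _
  have hanti : AntitoneOn (deriv φr) Set.univ :=
    hφr.2.1.antitoneOn_deriv fun x _ => hφr.2.2 x
  have hsign : ∀ (c : ℝ) (i j : Θ),
      (deriv φr (v i) - deriv φr (v j)) * ((v i - c) - (v j - c)) ≤ 0 := by
    intro c i j
    rcases le_total (v i) (v j) with hij | hij
    · exact mul_nonpos_iff.mpr (Or.inl ⟨sub_nonneg.mpr
        (hanti (Set.mem_univ _) (Set.mem_univ _) hij), by linarith⟩)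
    · exact mul_nonpos_iff.mpr (Or.inr ⟨sub_nonpos.mpr
        (hanti (Set.mem_univ _) (Set.mem_univ _) hij), by linarith⟩)
  set V : ℝ := ∑ θ, μ θ * v θ with hV
  have hWpos : 0 < ∑ θ, μ θ * deriv φr (v θ) := by
    have hex : ∃ θ, 0 < μ θ := by
      by_contra hc
      push_neg at hc
      have h0 : ∑ θ, μ θ = 0 :=
        Finset.sum_eq_zero fun θ _ => le_antisymm (hc θ) (hμ.1 θ)
      rw [hμ.2] at h0; norm_num at h0
    obtain ⟨θ0, hθ0⟩ := hex
    exact Finset.sum_pos' (fun θ _ => mul_nonneg (hμ.1 θ) (hwpos θ).le)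
      ⟨θ0, Finset.mem_univ _, mul_pos hθ0 (hwpos θ0)⟩
  have hsumc : ∀ c : ℝ, ∑ θ, μ θ * (v θ - c) = V - c := by
    intro c
    simp only [mul_sub, Finset.sum_sub_distrib, ← Finset.sum_mul, hμ.2, one_mul, ← hV]
  have hVK : ∀ c : ℝ, 0 ≤ ∑ θ, μ θ * (deriv φr (v θ) * (v θ - c)) → c ≤ V := by
    intro c hc
    have hch := aux_chebyshev μ (fun θ => deriv φr (v θ)) (fun θ => v θ - c) hμ.1 hμ.2
      (hsign c)
    rw [hsumc c] at hch
    nlinarith [hWpos]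
  have hVK0 : K0 ≤ V := hVK K0 hFOC1
  have hVK1 : K1 ≤ V := hVK K1 hFOC2
  -- the average experiment
  set σb : Ω → A → ℝ := fun ω a => ∑ θ, μ θ * σ θ ω a with hσb
  have hlin : ∀ (u : A → Ω → ℝ) (τ : A → A → ℝ),
      expPayoff p u σb τ = ∑ θ, μ θ * expPayoff p u (σ θ) τ := by
    intro u τ
    unfold expPayoff
    calc ∑ ω, ∑ m, ∑ a, p ω * σb ω m * τ m a * u a ω
        = ∑ ω, ∑ m, ∑ a, ∑ θ, μ θ * (p ω * σ θ ω m * τ m a * u a ω) := by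
          refine Finset.sum_congr rfl fun ω _ => Finset.sum_congr rfl fun m _ =>
            Finset.sum_congr rfl fun a _ => ?_
          simp only [hσb]
          rw [Finset.mul_sum, Finset.sum_mul, Finset.sum_mul]
          exact Finset.sum_congr rfl fun θ _ => by ring
      _ = ∑ ω, ∑ m, ∑ θ, ∑ a, μ θ * (p ω * σ θ ω m * τ m a * u a ω) :=
          Finset.sum_congr rfl fun ω _ => Finset.sum_congr rfl fun m _ =>
            Finset.sum_comm
      _ = ∑ ω, ∑ θ, ∑ m, ∑ a, μ θ * (p ω * σ θ ω m * τ m a * u a ω) :=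
          Finset.sum_congr rfl fun ω _ => Finset.sum_comm
      _ = ∑ θ, ∑ ω, ∑ m, ∑ a, μ θ * (p ω * σ θ ω m * τ m a * u a ω) :=
          Finset.sum_comm
      _ = ∑ θ, μ θ * ∑ ω, ∑ m, ∑ a, p ω * σ θ ω m * τ m a * u a ω := by
          refine Finset.sum_congr rfl fun θ _ => ?_
          simp only [Finset.mul_sum]
  have hσbk : IsKernel σb := by
    constructor
    · intro ω a
      exact Finset.sum_nonneg fun θ _ => mul_nonneg (hμ.1 θ) ((hσ θ).1 ω a)
    · intro ω
      simp only [hσb]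
      rw [Finset.sum_comm]
      calc ∑ θ, ∑ a, μ θ * σ θ ω a = ∑ θ, μ θ * ∑ a, σ θ ω a :=
            Finset.sum_congr rfl fun θ _ => (Finset.mul_sum _ _ _).symm
        _ = ∑ θ, μ θ := Finset.sum_congr rfl fun θ _ => by rw [(hσ θ).2 ω, mul_one]
        _ = 1 := hμ.2
  have hObed : Obedient p ur σb := by
    intro τ hτ
    have hτ0 : τ a0 a0 + τ a0 a1 = 1 := by have := hτ.2 a0; rwa [sumA] at this
    have hτ1 : τ a1 a0 + τ a1 a1 = 1 := by have := hτ.2 a1; rwa [sumA] at this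
    have hx1 : τ a1 a1 ≤ 1 := by linarith [hτ.1 a1 a0]
    have hy0 : 0 ≤ τ a0 a1 := hτ.1 a0 a1
    rw [hlin ur τ, hlin ur tauStar]
    have hL : ∑ θ, μ θ * expPayoff p ur (σ θ) τ
        = K0 + τ a1 a1 * (V - K0) + τ a0 a1 * (K1 - V) := by
      have e : ∀ θ, μ θ * expPayoff p ur (σ θ) τ
          = (K0 + τ a1 a1 * (-K0) + τ a0 a1 * K1) * μ θ
            + (τ a1 a1 - τ a0 a1) * (μ θ * v θ) := by
        intro θ; rw [hmaster θ τ hτ0 hτ1]; ring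
      rw [Finset.sum_congr rfl fun θ _ => e θ, Finset.sum_add_distrib,
        ← Finset.mul_sum, ← Finset.mul_sum, hμ.2, ← hV]
      ring
    have hR : ∑ θ, μ θ * expPayoff p ur (σ θ) tauStar = V := hV.symm
    rw [hL, hR]
    nlinarith [mul_nonneg (sub_nonneg.mpr hx1) (sub_nonneg.mpr hVK0),
      mul_nonneg hy0 (sub_nonneg.mpr hVK1)]
  have hmem : expPayoff p us σb tauStar ≤ usBP := husBP.2 ⟨σb, hσbk, hObed, rfl⟩
  have hsender : expPayoff p us σb tauStar
      = ∑ θ, μ θ * expPayoff p us (σ θ) tauStar := hlin us tauStar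
  have hjensen : ∑ θ, μ θ * φs (expPayoff p us (σ θ) tauStar)
      ≤ φs (∑ θ, μ θ * expPayoff p us (σ θ) tauStar) := by
    have h := hφs.2.1.le_map_sum (fun θ _ => hμ.1 θ) hμ.2
      (fun (θ : Θ) _ => Set.mem_univ (expPayoff p us (σ θ) tauStar))
    simpa [smul_eq_mul] using h
  calc ∑ θ, μ θ * φs (expPayoff p us (σ θ) tauStar)
      ≤ φs (∑ θ, μ θ * expPayoff p us (σ θ) tauStar) := hjensen
    _ ≤ φs usBP := hφs.1.monotone (by rw [← hsender]; exact hmem)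
end

section
/- Equivalent necessary conditions: If there exists an obedient ambiguous experiment (σ, μ) with U_s(σ, μ, τ*) > u_s^BP, then φ_r is not affine and there exist Pareto-ranked experiments σ and σ* such that: (i) for every state ω, the supports of σ(·|ω) and σ*(·|ω) coincide; (ii) u_s(σ, τ*) > u_s^BP; and (iii) σ* is obedient while σ is not obedient. -/
open Finset

section AuxHelpers

open Filter Topology

lemma sum_pos_iff_of_nonneg' {ι : Type*} [Fintype ι] {f : ι → ℝ} (h : ∀ i, 0 ≤ f i) :
    (0 < ∑ i, f i) ↔ ∃ i, 0 < f i := by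
  constructor
  · intro hs
    by_contra hne
    push_neg at hne
    have h0 : ∑ i, f i = 0 :=
      le_antisymm (Finset.sum_nonpos fun i _ => hne i) (Finset.sum_nonneg fun i _ => h i)
    rw [h0] at hs
    exact lt_irrefl 0 hs
  · rintro ⟨i, hi⟩
    exact Finset.sum_pos' (fun j _ => h j) ⟨i, Finset.mem_univ i, hi⟩

lemma mul_pos_iff_of_nonneg' {x y : ℝ} (hx : 0 ≤ x) (hy : 0 ≤ y) :
    0 < x * y ↔ 0 < x ∧ 0 < y := by
  constructor
  · intro h
    rcases hx.lt_or_eq with h1 | h1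
    · rcases hy.lt_or_eq with h2 | h2
      · exact ⟨h1, h2⟩
      · rw [← h2, mul_zero] at h; exact absurd h (lt_irrefl 0)
    · rw [← h1, zero_mul] at h; exact absurd h (lt_irrefl 0)
  · rintro ⟨h1, h2⟩
    exact mul_pos h1 h2

lemma pos_mix_iff {x y g h : ℝ} (hx : 0 < x) (hy : 0 < y) (hg : 0 ≤ g) (hh : 0 ≤ h) :
    0 < x * g + y * h ↔ 0 < g ∨ 0 < h := by
  constructor
  · intro hs
    by_contra hc
    push_neg at hc
    have h1 : g = 0 := le_antisymm hc.1 hg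
    have h2 : h = 0 := le_antisymm hc.2 hh
    rw [h1, h2, mul_zero, mul_zero, add_zero] at hs
    exact lt_irrefl 0 hs
  · rintro (h1 | h1)
    · have ha := mul_pos hx h1
      have hb := mul_nonneg hy.le hh
      linarith
    · have ha := mul_pos hy h1
      have hb := mul_nonneg hx.le hg
      linarith

lemma nonpos_of_hasDerivAt_of_le {f : ℝ → ℝ} {L : ℝ}
    (hf : HasDerivAt f L 0) (h : ∀ t ∈ Set.Ioc (0:ℝ) 1, f t ≤ f 0) : L ≤ 0 := by
  have hs := hasDerivAt_iff_tendsto_slope.mp hf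
  have hs' : Filter.Tendsto (slope f 0) (nhdsWithin 0 (Set.Ioi 0)) (nhds L) :=
    hs.mono_left (nhdsWithin_mono _ fun x hx => ne_of_gt hx)
  refine le_of_tendsto hs' ?_
  filter_upwards [Ioc_mem_nhdsGT zero_lt_one] with t ht
  rw [slope_def_field]
  exact div_nonpos_iff.mpr (Or.inr ⟨sub_nonpos.mpr (h t ht), by linarith [ht.1]⟩)

lemma ge_of_hasDerivAt_of_slope_ge {f : ℝ → ℝ} {L K : ℝ}
    (hf : HasDerivAt f L 0) (h : ∀ t ∈ Set.Ioc (0:ℝ) 1, K * t ≤ f t - f 0) : K ≤ L := by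
  have hs := hasDerivAt_iff_tendsto_slope.mp hf
  have hs' : Filter.Tendsto (slope f 0) (nhdsWithin 0 (Set.Ioi 0)) (nhds L) :=
    hs.mono_left (nhdsWithin_mono _ fun x hx => ne_of_gt hx)
  refine ge_of_tendsto hs' ?_
  filter_upwards [Ioc_mem_nhdsGT zero_lt_one] with t ht
  rw [slope_def_field]
  rw [le_div_iff₀ (by linarith [ht.1] : (0:ℝ) < t - 0)]
  calc K * (t - 0) = K * t := by ring
    _ ≤ f t - f 0 := h t ht

lemma SmoothIndex.deriv_pos {φ : ℝ → ℝ} (h : SmoothIndex φ) (x : ℝ) : 0 < deriv φ x := by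
  obtain ⟨hmono, hconc, hdiff⟩ := h
  have hd : HasDerivAt (fun t : ℝ => φ (x + t)) (deriv φ x) 0 := by
    have h1 : HasDerivAt (fun t : ℝ => x + t) 1 0 := (hasDerivAt_id 0).const_add x
    have h2 : HasDerivAt φ (deriv φ x) ((fun t : ℝ => x + t) 0) := by
      simpa using (hdiff (x + 0)).hasDerivAt
    have h3 := h2.comp 0 h1
    rw [mul_one] at h3
    exact h3
  have hK : φ (x + 1) - φ x ≤ deriv φ x := by
    apply ge_of_hasDerivAt_of_slope_ge hd
    intro t ht
    have hcc := hconc.2 (Set.mem_univ x) (Set.mem_univ (x + 1))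
      (by linarith [ht.2] : (0:ℝ) ≤ 1 - t) ht.1.le (by ring)
    simp only [smul_eq_mul] at hcc
    have hx : (1 - t) * x + t * (x + 1) = x + t := by ring
    rw [hx] at hcc
    simp only [add_zero]
    nlinarith [hcc]
  have hlt := hmono (lt_add_one x)
  linarith

end AuxHelpers

section ExpPayoffLemmas

variable {Ω A : Type*} [Fintype Ω] [Fintype A] [DecidableEq A]

lemma expPayoff_mix2 (p : Ω → ℝ) (u : A → Ω → ℝ) (x y : ℝ) (σa σb : Ω → A → ℝ)
    (τ : A → A → ℝ) :
    expPayoff p u (fun ω a => x * σa ω a + y * σb ω a) τ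
      = x * expPayoff p u σa τ + y * expPayoff p u σb τ := by
  unfold expPayoff
  rw [Finset.mul_sum, Finset.mul_sum, ← Finset.sum_add_distrib]
  refine Finset.sum_congr rfl fun ω _ => ?_
  rw [Finset.mul_sum, Finset.mul_sum, ← Finset.sum_add_distrib]
  refine Finset.sum_congr rfl fun m _ => ?_
  rw [Finset.mul_sum, Finset.mul_sum, ← Finset.sum_add_distrib]
  refine Finset.sum_congr rfl fun a _ => ?_
  ring

lemma expPayoff_smul_add (p : Ω → ℝ) (u : A → Ω → ℝ) (x : ℝ) (σa σb : Ω → A → ℝ)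
    (τ : A → A → ℝ) :
    expPayoff p u (fun ω a => x * σa ω a + σb ω a) τ
      = x * expPayoff p u σa τ + expPayoff p u σb τ := by
  unfold expPayoff
  rw [Finset.mul_sum, ← Finset.sum_add_distrib]
  refine Finset.sum_congr rfl fun ω _ => ?_
  rw [Finset.mul_sum, ← Finset.sum_add_distrib]
  refine Finset.sum_congr rfl fun m _ => ?_
  rw [Finset.mul_sum, ← Finset.sum_add_distrib]
  refine Finset.sum_congr rfl fun a _ => ?_
  ring

lemma expPayoff_tau_mix2 (p : Ω → ℝ) (u : A → Ω → ℝ) (x y : ℝ) (σ0 : Ω → A → ℝ)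
    (τa τb : A → A → ℝ) :
    expPayoff p u σ0 (fun m a => x * τa m a + y * τb m a)
      = x * expPayoff p u σ0 τa + y * expPayoff p u σ0 τb := by
  unfold expPayoff
  rw [Finset.mul_sum, Finset.mul_sum, ← Finset.sum_add_distrib]
  refine Finset.sum_congr rfl fun ω _ => ?_
  rw [Finset.mul_sum, Finset.mul_sum, ← Finset.sum_add_distrib]
  refine Finset.sum_congr rfl fun m _ => ?_
  rw [Finset.mul_sum, Finset.mul_sum, ← Finset.sum_add_distrib]
  refine Finset.sum_congr rfl fun a _ => ?_
  ring

lemma expPayoff_weighted_on (p : Ω → ℝ) (u : A → Ω → ℝ) {ι : Type*} [DecidableEq ι]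
    (s : Finset ι) (w : ι → ℝ) (σs : ι → Ω → A → ℝ) (τ : A → A → ℝ) :
    expPayoff p u (fun ω a => ∑ i ∈ s, w i * σs i ω a) τ
      = ∑ i ∈ s, w i * expPayoff p u (σs i) τ := by
  induction s using Finset.induction_on with
  | empty =>
      simp only [Finset.sum_empty]
      unfold expPayoff
      simp
  | @insert j s hj ih =>
      have e1 : (fun ω a => ∑ i ∈ insert j s, w i * σs i ω a)
          = fun ω a => w j * σs j ω a + ∑ i ∈ s, w i * σs i ω a := by
        funext ω a
        rw [Finset.sum_insert hj]
      rw [e1, Finset.sum_insert hj, expPayoff_smul_add, ih]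

lemma expPayoff_weighted (p : Ω → ℝ) (u : A → Ω → ℝ) {ι : Type*} [Fintype ι]
    (w : ι → ℝ) (σs : ι → Ω → A → ℝ) (τ : A → A → ℝ) :
    expPayoff p u (fun ω a => ∑ i, w i * σs i ω a) τ
      = ∑ i, w i * expPayoff p u (σs i) τ := by
  classical
  exact expPayoff_weighted_on p u Finset.univ w σs τ

lemma expPayoff_rearrange (p : Ω → ℝ) (u : A → Ω → ℝ) (σ0 : Ω → A → ℝ) (τ : A → A → ℝ) :
    expPayoff p u σ0 τ = ∑ m, ∑ a, τ m a * ∑ ω, p ω * σ0 ω m * u a ω := by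
  unfold expPayoff
  rw [Finset.sum_comm]
  refine Finset.sum_congr rfl fun m _ => ?_
  rw [Finset.sum_comm]
  refine Finset.sum_congr rfl fun a _ => ?_
  rw [Finset.mul_sum]
  refine Finset.sum_congr rfl fun ω _ => ?_
  ring

lemma expPayoff_comp (p : Ω → ℝ) (u : A → Ω → ℝ) (σ0 : Ω → A → ℝ) (κ τ : A → A → ℝ) :
    expPayoff p u (fun ω a => ∑ m, σ0 ω m * κ m a) τ
      = expPayoff p u σ0 (fun m a => ∑ b, κ m b * τ b a) := by
  rw [expPayoff_rearrange, expPayoff_rearrange]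
  have key : ∀ b a : A, (∑ ω, p ω * (∑ m, σ0 ω m * κ m b) * u a ω)
      = ∑ m, κ m b * ∑ ω, p ω * σ0 ω m * u a ω := by
    intro b a
    calc ∑ ω, p ω * (∑ m, σ0 ω m * κ m b) * u a ω
        = ∑ ω, ∑ m, κ m b * (p ω * σ0 ω m * u a ω) := by
          refine Finset.sum_congr rfl fun ω _ => ?_
          rw [Finset.mul_sum, Finset.sum_mul]
          refine Finset.sum_congr rfl fun m _ => ?_
          ring
      _ = ∑ m, ∑ ω, κ m b * (p ω * σ0 ω m * u a ω) := Finset.sum_comm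
      _ = ∑ m, κ m b * ∑ ω, p ω * σ0 ω m * u a ω := by
          refine Finset.sum_congr rfl fun m _ => ?_
          rw [Finset.mul_sum]
  calc ∑ b, ∑ a, τ b a * ∑ ω, p ω * (∑ m, σ0 ω m * κ m b) * u a ω
      = ∑ b, ∑ a, ∑ m, τ b a * (κ m b * ∑ ω, p ω * σ0 ω m * u a ω) := by
        refine Finset.sum_congr rfl fun b _ => Finset.sum_congr rfl fun a _ => ?_
        rw [key b a, Finset.mul_sum]
    _ = ∑ b, ∑ m, ∑ a, τ b a * (κ m b * ∑ ω, p ω * σ0 ω m * u a ω) := by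
        refine Finset.sum_congr rfl fun b _ => ?_
        exact Finset.sum_comm
    _ = ∑ m, ∑ b, ∑ a, τ b a * (κ m b * ∑ ω, p ω * σ0 ω m * u a ω) := Finset.sum_comm
    _ = ∑ m, ∑ a, ∑ b, τ b a * (κ m b * ∑ ω, p ω * σ0 ω m * u a ω) := by
        refine Finset.sum_congr rfl fun m _ => ?_
        exact Finset.sum_comm
    _ = ∑ m, ∑ a, (∑ b, κ m b * τ b a) * ∑ ω, p ω * σ0 ω m * u a ω := by
        refine Finset.sum_congr rfl fun m _ => Finset.sum_congr rfl fun a _ => ?_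
        rw [Finset.sum_mul]
        refine Finset.sum_congr rfl fun b _ => ?_
        ring

lemma comp_tauStar (κ : A → A → ℝ) :
    (fun m a => ∑ b, κ m b * tauStar b a) = κ := by
  funext m a
  simp [tauStar, mul_ite, mul_one, mul_zero, Finset.sum_ite_eq]

lemma expPayoff_constStrat (p : Ω → ℝ) (u : A → Ω → ℝ) (σ0 : Ω → A → ℝ)
    (hσ0 : IsKernel σ0) (a0 : A) :
    expPayoff p u σ0 (fun _ a => if a = a0 then (1:ℝ) else 0) = ∑ ω, p ω * u a0 ω := by
  unfold expPayoff
  refine Finset.sum_congr rfl fun ω _ => ?_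
  calc ∑ m, ∑ a, p ω * σ0 ω m * (if a = a0 then (1:ℝ) else 0) * u a ω
      = ∑ m, p ω * σ0 ω m * u a0 ω := by
        refine Finset.sum_congr rfl fun m _ => ?_
        rw [Finset.sum_eq_single a0]
        · simp
        · intro b _ hb
          simp [hb]
        · intro hmem
          exact absurd (Finset.mem_univ a0) hmem
    _ = p ω * u a0 ω := by
        have hkey : ∑ m, p ω * σ0 ω m * u a0 ω = (∑ m, σ0 ω m) * (p ω * u a0 ω) := by
          rw [Finset.sum_mul]
          refine Finset.sum_congr rfl fun m _ => ?_
          ring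
        rw [hkey, hσ0.2 ω, one_mul]

lemma expPayoff_constExp (p : Ω → ℝ) (u : A → Ω → ℝ) (a0 : A) (τ : A → A → ℝ) :
    expPayoff p u (fun _ m => if m = a0 then (1:ℝ) else 0) τ
      = ∑ a, τ a0 a * ∑ ω, p ω * u a ω := by
  rw [expPayoff_rearrange]
  rw [Finset.sum_eq_single a0]
  · refine Finset.sum_congr rfl fun a _ => ?_
    congr 1
    refine Finset.sum_congr rfl fun ω _ => ?_
    simp
  · intro m _ hm
    apply Finset.sum_eq_zero
    intro a _
    have hz : ∑ ω, p ω * (if m = a0 then (1:ℝ) else 0) * u a ω = 0 := by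
      apply Finset.sum_eq_zero
      intro ω _
      simp [hm]
    rw [hz, mul_zero]
  · intro hmem
    exact absurd (Finset.mem_univ a0) hmem

end ExpPayoffLemmas

section KernelLemmas

lemma isKernel_mix2 {X Y : Type*} [Fintype Y] {ka kb : X → Y → ℝ} (x y : ℝ)
    (hx : 0 ≤ x) (hy : 0 ≤ y) (hxy : x + y = 1)
    (ha : IsKernel ka) (hb : IsKernel kb) :
    IsKernel (fun s t => x * ka s t + y * kb s t) := by
  constructor
  · intro s t
    exact add_nonneg (mul_nonneg hx (ha.1 s t)) (mul_nonneg hy (hb.1 s t))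
  · intro s
    rw [Finset.sum_add_distrib, ← Finset.mul_sum, ← Finset.mul_sum, ha.2 s, hb.2 s,
      mul_one, mul_one]
    exact hxy

lemma isKernel_det {X Y : Type*} [Fintype Y] [DecidableEq Y] (f : X → Y) :
    IsKernel (fun x y => if y = f x then (1:ℝ) else 0) := by
  constructor
  · intro x y
    dsimp only
    split <;> norm_num
  · intro x
    simp [Finset.sum_ite_eq']

lemma isKernel_tauStar {A : Type*} [Fintype A] [DecidableEq A] :
    IsKernel (tauStar (A := A)) := by
  constructor
  · intro m a
    unfold tauStar
    split <;> norm_num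
  · intro m
    unfold tauStar
    simp [Finset.sum_ite_eq']

lemma isKernel_comp {X Y Z : Type*} [Fintype Y] [Fintype Z] {k1 : X → Y → ℝ}
    {k2 : Y → Z → ℝ} (h1 : IsKernel k1) (h2 : IsKernel k2) :
    IsKernel (fun x z => ∑ y, k1 x y * k2 y z) := by
  constructor
  · intro x z
    exact Finset.sum_nonneg fun y _ => mul_nonneg (h1.1 x y) (h2.1 y z)
  · intro x
    rw [Finset.sum_comm]
    calc ∑ y, ∑ z, k1 x y * k2 y z = ∑ y, k1 x y := by
          refine Finset.sum_congr rfl fun y _ => ?_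
          rw [← Finset.mul_sum, h2.2 y, mul_one]
      _ = 1 := h1.2 x

lemma isKernel_weighted {X Y ι : Type*} [Fintype Y] [Fintype ι] {w : ι → ℝ}
    {ks : ι → X → Y → ℝ} (hw : ∀ i, 0 ≤ w i) (hw1 : ∑ i, w i = 1)
    (hk : ∀ i, IsKernel (ks i)) :
    IsKernel (fun x y => ∑ i, w i * ks i x y) := by
  constructor
  · intro x y
    exact Finset.sum_nonneg fun i _ => mul_nonneg (hw i) ((hk i).1 x y)
  · intro x
    rw [Finset.sum_comm]
    calc ∑ i, ∑ y, w i * ks i x y = ∑ i, w i := by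
          refine Finset.sum_congr rfl fun i _ => ?_
          rw [← Finset.mul_sum, (hk i).2 x, mul_one]
      _ = 1 := hw1

lemma obedient_mix2 {Ω A : Type*} [Fintype Ω] [Fintype A] [DecidableEq A]
    (p : Ω → ℝ) (ur : A → Ω → ℝ) (x y : ℝ) (hx : 0 ≤ x) (hy : 0 ≤ y)
    {σa σb : Ω → A → ℝ} (ha : Obedient p ur σa) (hb : Obedient p ur σb) :
    Obedient p ur (fun ω a => x * σa ω a + y * σb ω a) := by
  intro τ hτ
  rw [expPayoff_mix2, expPayoff_mix2]
  exact add_le_add (mul_le_mul_of_nonneg_left (ha τ hτ) hx)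
    (mul_le_mul_of_nonneg_left (hb τ hτ) hy)

end KernelLemmas

section NumericHelpers

lemma delta_bounds {D1 D2 c q δ : ℝ} (hD1 : 0 < D1) (hD2 : 0 ≤ D2) (hc : 0 < c) (hq : 0 ≤ q)
    (hδ : δ = (1/2 : ℝ) * min (D1 / (D1 + D2 + 1)) (c / (c + q + 1))) :
    0 < δ ∧ δ ≤ 1/2 ∧ δ * (D1 + D2) < D1 ∧ δ * q < (1 - δ) * c := by
  have hT1 : (0:ℝ) < D1 + D2 + 1 := by linarith
  have hT2 : (0:ℝ) < c + q + 1 := by linarith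
  have hm1 : min (D1 / (D1 + D2 + 1)) (c / (c + q + 1)) ≤ D1 / (D1 + D2 + 1) :=
    min_le_left _ _
  have hm2 : min (D1 / (D1 + D2 + 1)) (c / (c + q + 1)) ≤ c / (c + q + 1) :=
    min_le_right _ _
  have hmpos : 0 < min (D1 / (D1 + D2 + 1)) (c / (c + q + 1)) :=
    lt_min (div_pos hD1 hT1) (div_pos hc hT2)
  have hδpos : 0 < δ := by rw [hδ]; positivity
  have hle1 : D1 / (D1 + D2 + 1) ≤ 1 := by
    rw [div_le_one hT1]; linarith
  have hδhalf : δ ≤ 1/2 := by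
    rw [hδ]; nlinarith [hm1, hle1]
  have key1 : D1 / (D1 + D2 + 1) * (D1 + D2) < D1 := by
    rw [div_mul_eq_mul_div, div_lt_iff₀ hT1]
    nlinarith
  have hδle1 : δ ≤ (1/2 : ℝ) * (D1 / (D1 + D2 + 1)) := by
    rw [hδ]; linarith [hm1]
  have hδ1 : δ * (D1 + D2) < D1 := by
    have h3 := mul_le_mul_of_nonneg_right hδle1 (by linarith : (0:ℝ) ≤ D1 + D2)
    nlinarith [key1]
  have key2 : c / (c + q + 1) * q < c := by
    rw [div_mul_eq_mul_div, div_lt_iff₀ hT2]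
    nlinarith
  have hδle2 : δ ≤ (1/2 : ℝ) * (c / (c + q + 1)) := by
    rw [hδ]; linarith [hm2]
  have hδ2 : δ * q < (1 - δ) * c := by
    have h4 := mul_le_mul_of_nonneg_right hδle2 hq
    nlinarith [key2, hδhalf, hc]
  exact ⟨hδpos, hδhalf, hδ1, hδ2⟩

lemma eps_bounds {c δ u ε : ℝ} (hc : 0 < c) (hδ : 0 < δ) (hδ2 : δ ≤ 1/2) (hu : c/3 ≤ u)
    (hε : ε = δ * c / (6 * u + 1)) :
    0 < ε ∧ ε < 1 ∧ ε * u < δ * (c/3) := by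
  have hu0 : 0 < u := by linarith
  have hden : (0:ℝ) < 6 * u + 1 := by linarith
  have hεpos : 0 < ε := by rw [hε]; exact div_pos (mul_pos hδ hc) hden
  have hεlt1 : ε < 1 := by
    rw [hε, div_lt_one hden]
    nlinarith [mul_le_mul_of_nonneg_right hδ2 hc.le]
  have hbnd : ε * u < δ * (c/3) := by
    rw [hε, div_mul_eq_mul_div, div_lt_iff₀ hden]
    nlinarith [mul_pos (mul_pos hδ hc) hu0, mul_pos hδ hc]
  exact ⟨hεpos, hεlt1, hbnd⟩

end NumericHelpers

set_option maxHeartbeats 2000000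

/-- Lemma A.5, equivalent necessary conditions: if some obedient ambiguous
experiment benefits the sender, then `φr` is not affine and there exist Pareto-ranked
experiments `σ1` and `σ2` such that (i) for each `ω` the supports of `σ1(·|ω)` and
`σ2(·|ω)` coincide, (ii) `u_s(σ1, τ*) > u_s^BP`, and (iii) `σ2` is obedient while `σ1`
is not obedient. -/
theorem equivalent_necessary_conditions
    {Ω A Θ : Type*} [Fintype Ω] [Fintype A] [DecidableEq A] [Fintype Θ]
    (p : Ω → ℝ) (hp : IsProb p) (us ur : A → Ω → ℝ)
    (φs φr : ℝ → ℝ) (hφs : SmoothIndex φs) (hφr : SmoothIndex φr)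
    (usBP : ℝ)
    (husBP : IsGreatest {x : ℝ | ∃ σ0 : Ω → A → ℝ,
      IsKernel σ0 ∧ Obedient p ur σ0 ∧ x = expPayoff p us σ0 tauStar} usBP)
    (σ : Θ → Ω → A → ℝ) (hσ : ∀ θ, IsKernel (σ θ)) (μ : Θ → ℝ) (hμ : IsProb μ)
    (hobed : AmbObedient φr p ur σ μ)
    (hben : φs usBP < ∑ θ, μ θ * φs (expPayoff p us (σ θ) tauStar)) :
    (¬ ∃ α β : ℝ, ∀ x, φr x = α * x + β) ∧
    ∃ σ1 σ2 : Ω → A → ℝ, IsKernel σ1 ∧ IsKernel σ2 ∧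
      ParetoRanked p us ur σ1 σ2 ∧
      (∀ ω, {a | 0 < σ1 ω a} = {a | 0 < σ2 ω a}) ∧
      usBP < expPayoff p us σ1 tauStar ∧
      Obedient p ur σ2 ∧ ¬ Obedient p ur σ1 := by
  classical
  obtain ⟨hp0, hp1⟩ := hp
  obtain ⟨hμ0, hμ1⟩ := hμ
  -- nonemptiness of the three types
  have hΘne : Nonempty Θ := by
    by_contra h
    rw [not_nonempty_iff] at h
    haveI := h
    rw [Finset.univ_eq_empty, Finset.sum_empty] at hμ1
    norm_num at hμ1
  have hΩne : Nonempty Ω := by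
    by_contra h
    rw [not_nonempty_iff] at h
    haveI := h
    rw [Finset.univ_eq_empty, Finset.sum_empty] at hp1
    norm_num at hp1
  have hAne : Nonempty A := by
    by_contra h
    rw [not_nonempty_iff] at h
    haveI := h
    obtain ⟨θ0⟩ := hΘne
    obtain ⟨ω0⟩ := hΩne
    have hrow := (hσ θ0).2 ω0
    rw [Finset.univ_eq_empty, Finset.sum_empty] at hrow
    norm_num at hrow
  haveI := hAne
  -- the average experiment σ̄
  have hσbarK : IsKernel (fun ω a => ∑ θ, μ θ * σ θ ω a) :=
    isKernel_weighted hμ0 hμ1 hσ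
  have hbar_eq : ∀ (v : A → Ω → ℝ) (τ : A → A → ℝ),
      expPayoff p v (fun ω a => ∑ θ, μ θ * σ θ ω a) τ
        = ∑ θ, μ θ * expPayoff p v (σ θ) τ := by
    intro v τ
    exact expPayoff_weighted p v μ σ τ
  -- Jensen
  have jens : ∀ (φ : ℝ → ℝ), ConcaveOn ℝ Set.univ φ → ∀ x : Θ → ℝ,
      ∑ θ, μ θ * φ (x θ) ≤ φ (∑ θ, μ θ * x θ) := by
    intro φ hφ x
    have h := hφ.le_map_sum (fun θ _ => hμ0 θ) hμ1 (fun θ _ => Set.mem_univ (x θ))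
    simpa [smul_eq_mul] using h
  -- the sender strictly prefers σ̄ to the Bayesian optimum
  have hsbar_gt : usBP < expPayoff p us (fun ω a => ∑ θ, μ θ * σ θ ω a) tauStar := by
    have h1 : ∑ θ, μ θ * φs (expPayoff p us (σ θ) tauStar)
        ≤ φs (∑ θ, μ θ * expPayoff p us (σ θ) tauStar) :=
      jens φs hφs.2.1 _
    have h2 : φs usBP < φs (expPayoff p us (fun ω a => ∑ θ, μ θ * σ θ ω a) tauStar) := by
      rw [hbar_eq us tauStar]
      exact lt_of_lt_of_le hben h1
    exact hφs.1.lt_iff_lt.mp h2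
  have hσbar_notOb : ¬ Obedient p ur (fun ω a => ∑ θ, μ θ * σ θ ω a) := by
    intro hob
    have hmem : expPayoff p us (fun ω a => ∑ θ, μ θ * σ θ ω a) tauStar ≤ usBP :=
      husBP.2 ⟨_, hσbarK, hob, rfl⟩
    linarith
  constructor
  · -- φr is not affine
    rintro ⟨α, β, hαβ⟩
    have hα : 0 < α := by
      have h01 : φr 0 < φr 1 := hφr.1 zero_lt_one
      rw [hαβ 0, hαβ 1] at h01
      linarith
    apply hσbar_notOb
    intro τ hτ
    have key : ∀ x : Θ → ℝ, ∑ θ, μ θ * φr (x θ) = α * (∑ θ, μ θ * x θ) + β := by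
      intro x
      have hterm : ∀ θ : Θ, μ θ * φr (x θ) = α * (μ θ * x θ) + β * μ θ := by
        intro θ
        rw [hαβ (x θ)]
        ring
      rw [Finset.sum_congr rfl fun θ _ => hterm θ, Finset.sum_add_distrib,
        ← Finset.mul_sum, ← Finset.mul_sum, hμ1, mul_one]
    have h3 := hobed τ hτ
    rw [key, key] at h3
    rw [hbar_eq ur τ, hbar_eq ur tauStar]
    have h4 : α * (∑ θ, μ θ * expPayoff p ur (σ θ) τ)
        ≤ α * (∑ θ, μ θ * expPayoff p ur (σ θ) tauStar) := by linarith
    exact (mul_le_mul_iff_right₀ hα).mp h4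
  -- ==================== construction ====================
  have hdpos : ∀ x, 0 < deriv φr x := fun x => SmoothIndex.deriv_pos hφr x
  -- first-order condition of ambiguous obedience
  have hfoc : ∀ τ : A → A → ℝ, IsKernel τ →
      ∑ θ, μ θ * (deriv φr (expPayoff p ur (σ θ) tauStar) *
        (expPayoff p ur (σ θ) τ - expPayoff p ur (σ θ) tauStar)) ≤ 0 := by
    intro τ hτ
    refine nonpos_of_hasDerivAt_of_le
      (f := fun t : ℝ => ∑ θ, μ θ * φr (expPayoff p ur (σ θ) tauStar
        + t * (expPayoff p ur (σ θ) τ - expPayoff p ur (σ θ) tauStar))) ?_ ?_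
    · apply HasDerivAt.fun_sum
      intro θ _
      have h1 : HasDerivAt (fun t : ℝ => expPayoff p ur (σ θ) tauStar
          + t * (expPayoff p ur (σ θ) τ - expPayoff p ur (σ θ) tauStar))
          (expPayoff p ur (σ θ) τ - expPayoff p ur (σ θ) tauStar) 0 :=
        (hasDerivAt_mul_const _).const_add _
      have h2 : HasDerivAt φr (deriv φr (expPayoff p ur (σ θ) tauStar))
          (expPayoff p ur (σ θ) tauStar
            + 0 * (expPayoff p ur (σ θ) τ - expPayoff p ur (σ θ) tauStar)) := by
        rw [zero_mul, add_zero]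
        exact (hφr.2.2 _).hasDerivAt
      have h3 := (h2.comp 0 h1).const_mul (μ θ)
      simpa [Function.comp] using h3
    · intro t ht
      show (∑ θ, μ θ * φr (expPayoff p ur (σ θ) tauStar
          + t * (expPayoff p ur (σ θ) τ - expPayoff p ur (σ θ) tauStar)))
        ≤ ∑ θ, μ θ * φr (expPayoff p ur (σ θ) tauStar
          + 0 * (expPayoff p ur (σ θ) τ - expPayoff p ur (σ θ) tauStar))
      have hker : IsKernel (fun m a => (1 - t) * tauStar m a + t * τ m a) :=
        isKernel_mix2 (1 - t) t (by linarith [ht.2]) ht.1.le (by ring) isKernel_tauStar hτ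
      have h1 := hobed _ hker
      have h2 : ∀ θ : Θ,
          expPayoff p ur (σ θ) (fun m a => (1 - t) * tauStar m a + t * τ m a)
          = expPayoff p ur (σ θ) tauStar
            + t * (expPayoff p ur (σ θ) τ - expPayoff p ur (σ θ) tauStar) := by
        intro θ
        rw [expPayoff_tau_mix2]
        ring
      calc ∑ θ, μ θ * φr (expPayoff p ur (σ θ) tauStar
            + t * (expPayoff p ur (σ θ) τ - expPayoff p ur (σ θ) tauStar))
          = ∑ θ, μ θ * φr (expPayoff p ur (σ θ)
              (fun m a => (1 - t) * tauStar m a + t * τ m a)) := by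
            refine Finset.sum_congr rfl fun θ _ => ?_
            rw [h2 θ]
        _ ≤ ∑ θ, μ θ * φr (expPayoff p ur (σ θ) tauStar) := h1
        _ = ∑ θ, μ θ * φr (expPayoff p ur (σ θ) tauStar
              + 0 * (expPayoff p ur (σ θ) τ - expPayoff p ur (σ θ) tauStar)) := by
            refine Finset.sum_congr rfl fun θ _ => ?_
            rw [zero_mul, add_zero]
  -- the hedging experiment G
  have hμex : ∃ θ, 0 < μ θ := by
    by_contra h
    push_neg at h
    have hz : ∑ θ, μ θ = 0 :=
      le_antisymm (Finset.sum_nonpos fun θ _ => h θ) (Finset.sum_nonneg fun θ _ => hμ0 θ)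
    rw [hz] at hμ1
    norm_num at hμ1
  have hZpos : 0 < ∑ θ', μ θ' * deriv φr (expPayoff p ur (σ θ') tauStar) := by
    obtain ⟨θ1, hθ1⟩ := hμex
    exact Finset.sum_pos' (fun θ _ => mul_nonneg (hμ0 θ) (hdpos _).le)
      ⟨θ1, Finset.mem_univ θ1, mul_pos hθ1 (hdpos _)⟩
  have hGK : IsKernel (fun ω a => ∑ θ,
      (μ θ * deriv φr (expPayoff p ur (σ θ) tauStar)
        / (∑ θ', μ θ' * deriv φr (expPayoff p ur (σ θ') tauStar))) * σ θ ω a) := by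
    apply isKernel_weighted
      (fun θ => div_nonneg (mul_nonneg (hμ0 θ) (hdpos _).le) hZpos.le) ?_ hσ
    rw [← Finset.sum_div, div_self hZpos.ne']
  have hG_eq : ∀ (v : A → Ω → ℝ) (τ : A → A → ℝ),
      expPayoff p v (fun ω a => ∑ θ,
        (μ θ * deriv φr (expPayoff p ur (σ θ) tauStar)
          / (∑ θ', μ θ' * deriv φr (expPayoff p ur (σ θ') tauStar))) * σ θ ω a) τ
      = ∑ θ, (μ θ * deriv φr (expPayoff p ur (σ θ) tauStar)
          / (∑ θ', μ θ' * deriv φr (expPayoff p ur (σ θ') tauStar)))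
          * expPayoff p v (σ θ) τ := by
    intro v τ
    exact expPayoff_weighted p v _ σ τ
  have hGOb : Obedient p ur (fun ω a => ∑ θ,
      (μ θ * deriv φr (expPayoff p ur (σ θ) tauStar)
        / (∑ θ', μ θ' * deriv φr (expPayoff p ur (σ θ') tauStar))) * σ θ ω a) := by
    intro τ hτ
    rw [hG_eq ur τ, hG_eq ur tauStar]
    have h1 := hfoc τ hτ
    have h2 : (∑ θ, (μ θ * deriv φr (expPayoff p ur (σ θ) tauStar)
          / (∑ θ', μ θ' * deriv φr (expPayoff p ur (σ θ') tauStar)))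
          * expPayoff p ur (σ θ) τ)
        - (∑ θ, (μ θ * deriv φr (expPayoff p ur (σ θ) tauStar)
          / (∑ θ', μ θ' * deriv φr (expPayoff p ur (σ θ') tauStar)))
          * expPayoff p ur (σ θ) tauStar)
        = (∑ θ, μ θ * (deriv φr (expPayoff p ur (σ θ) tauStar) *
            (expPayoff p ur (σ θ) τ - expPayoff p ur (σ θ) tauStar)))
          / (∑ θ', μ θ' * deriv φr (expPayoff p ur (σ θ') tauStar)) := by
      rw [← Finset.sum_sub_distrib, Finset.sum_div]
      refine Finset.sum_congr rfl fun θ _ => ?_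
      field_simp
    have h3 : (∑ θ, μ θ * (deriv φr (expPayoff p ur (σ θ) tauStar) *
          (expPayoff p ur (σ θ) τ - expPayoff p ur (σ θ) tauStar)))
        / (∑ θ', μ θ' * deriv φr (expPayoff p ur (σ θ') tauStar)) ≤ 0 :=
      div_nonpos_iff.mpr (Or.inr ⟨h1, hZpos.le⟩)
    linarith
  have hsuppG : ∀ ω a, (0 < ∑ θ,
      (μ θ * deriv φr (expPayoff p ur (σ θ) tauStar)
        / (∑ θ', μ θ' * deriv φr (expPayoff p ur (σ θ') tauStar))) * σ θ ω a)
      ↔ 0 < ∑ θ, μ θ * σ θ ω a := by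
    intro ω a
    rw [sum_pos_iff_of_nonneg' (fun θ => mul_nonneg
        (div_nonneg (mul_nonneg (hμ0 θ) (hdpos _).le) hZpos.le) ((hσ θ).1 ω a)),
      sum_pos_iff_of_nonneg' (fun θ => mul_nonneg (hμ0 θ) ((hσ θ).1 ω a))]
    constructor
    · rintro ⟨θ, hθ⟩
      have h1 := (mul_pos_iff_of_nonneg'
        (div_nonneg (mul_nonneg (hμ0 θ) (hdpos _).le) hZpos.le) ((hσ θ).1 ω a)).mp hθ
      refine ⟨θ, mul_pos ?_ h1.2⟩
      by_contra hc
      push_neg at hc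
      have hz : μ θ = 0 := le_antisymm hc (hμ0 θ)
      have h5 := h1.1
      rw [hz, zero_mul, zero_div] at h5
      exact lt_irrefl 0 h5
    · rintro ⟨θ, hθ⟩
      have h1 := (mul_pos_iff_of_nonneg' (hμ0 θ) ((hσ θ).1 ω a)).mp hθ
      exact ⟨θ, mul_pos (div_pos (mul_pos h1.1 (hdpos _)) hZpos) h1.2⟩
  -- deterministic best reply τ̂ against σ̄
  have hbrex : ∃ f : A → A, ∀ m b, (∑ ω, p ω * (∑ θ, μ θ * σ θ ω m) * ur b ω)
      ≤ ∑ ω, p ω * (∑ θ, μ θ * σ θ ω m) * ur (f m) ω := by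
    have hch : ∀ m : A, ∃ b0 : A, ∀ b : A,
        (∑ ω, p ω * (∑ θ, μ θ * σ θ ω m) * ur b ω)
        ≤ ∑ ω, p ω * (∑ θ, μ θ * σ θ ω m) * ur b0 ω := by
      intro m
      obtain ⟨b0, _, hb0⟩ := Finset.exists_max_image Finset.univ
        (fun b => ∑ ω, p ω * (∑ θ, μ θ * σ θ ω m) * ur b ω) Finset.univ_nonempty
      exact ⟨b0, fun b => hb0 b (Finset.mem_univ b)⟩
    choose f hf using hch
    exact ⟨f, hf⟩
  obtain ⟨f, hf⟩ := hbrex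
  have hτhatK : IsKernel (fun m a => if a = f m then (1:ℝ) else 0) := isKernel_det f
  have hbest : ∀ τ : A → A → ℝ, IsKernel τ →
      expPayoff p ur (fun ω a => ∑ θ, μ θ * σ θ ω a) τ
        ≤ expPayoff p ur (fun ω a => ∑ θ, μ θ * σ θ ω a)
            (fun m a => if a = f m then (1:ℝ) else 0) := by
    intro τ hτ
    rw [expPayoff_rearrange, expPayoff_rearrange]
    refine Finset.sum_le_sum fun m _ => ?_
    have hr : ∑ a, (if a = f m then (1:ℝ) else 0)
        * (∑ ω, p ω * (∑ θ, μ θ * σ θ ω m) * ur a ω)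
        = ∑ ω, p ω * (∑ θ, μ θ * σ θ ω m) * ur (f m) ω := by
      rw [Finset.sum_eq_single (f m)]
      · simp
      · intro b _ hb
        simp [hb]
      · intro hmem
        exact absurd (Finset.mem_univ (f m)) hmem
    rw [hr]
    calc ∑ a, τ m a * ∑ ω, p ω * (∑ θ, μ θ * σ θ ω m) * ur a ω
        ≤ ∑ a, τ m a * ∑ ω, p ω * (∑ θ, μ θ * σ θ ω m) * ur (f m) ω := by
          refine Finset.sum_le_sum fun a _ => ?_
          exact mul_le_mul_of_nonneg_left (hf m a) (hτ.1 m a)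
      _ = (∑ a, τ m a) * ∑ ω, p ω * (∑ θ, μ θ * σ θ ω m) * ur (f m) ω := by
          rw [← Finset.sum_mul]
      _ = ∑ ω, p ω * (∑ θ, μ θ * σ θ ω m) * ur (f m) ω := by
          rw [hτ.2 m, one_mul]
  -- the receiver's strict gain at σ̄
  have hτ0ex : ∃ τ0 : A → A → ℝ, IsKernel τ0 ∧
      expPayoff p ur (fun ω a => ∑ θ, μ θ * σ θ ω a) tauStar
        < expPayoff p ur (fun ω a => ∑ θ, μ θ * σ θ ω a) τ0 := by
    by_contra h
    push_neg at h
    exact hσbar_notOb fun τ hτ => h τ hτ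
  obtain ⟨τ0, hτ0K, hτ0lt⟩ := hτ0ex
  have hchat : expPayoff p ur (fun ω a => ∑ θ, μ θ * σ θ ω a) tauStar
      < expPayoff p ur (fun ω a => ∑ θ, μ θ * σ θ ω a)
          (fun m a => if a = f m then (1:ℝ) else 0) :=
    lt_of_lt_of_le hτ0lt (hbest τ0 hτ0K)
  -- the composed obedient experiment σ̂
  have hσhatK : IsKernel (fun ω a => ∑ m, (∑ θ, μ θ * σ θ ω m)
      * (if a = f m then (1:ℝ) else 0)) :=
    isKernel_comp hσbarK hτhatK
  have hσhat_pay : ∀ (v : A → Ω → ℝ) (τ : A → A → ℝ),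
      expPayoff p v (fun ω a => ∑ m, (∑ θ, μ θ * σ θ ω m)
        * (if a = f m then (1:ℝ) else 0)) τ
      = expPayoff p v (fun ω a => ∑ θ, μ θ * σ θ ω a)
          (fun m a => ∑ b, (if b = f m then (1:ℝ) else 0) * τ b a) := by
    intro v τ
    exact expPayoff_comp p v _ _ τ
  have hσhat_star : ∀ v : A → Ω → ℝ,
      expPayoff p v (fun ω a => ∑ m, (∑ θ, μ θ * σ θ ω m)
        * (if a = f m then (1:ℝ) else 0)) tauStar
      = expPayoff p v (fun ω a => ∑ θ, μ θ * σ θ ω a)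
          (fun m a => if a = f m then (1:ℝ) else 0) := by
    intro v
    rw [hσhat_pay v tauStar, comp_tauStar]
  have hσhatOb : Obedient p ur (fun ω a => ∑ m, (∑ θ, μ θ * σ θ ω m)
      * (if a = f m then (1:ℝ) else 0)) := by
    intro τ hτ
    rw [hσhat_pay ur τ, hσhat_star ur]
    exact hbest _ (isKernel_comp hτhatK hτ)
  -- the no-information experiment at the prior-best action
  obtain ⟨astar, _, hastar'⟩ := Finset.exists_max_image Finset.univ
    (fun a => ∑ ω, p ω * ur a ω) Finset.univ_nonempty
  have hastar : ∀ a : A, (∑ ω, p ω * ur a ω) ≤ ∑ ω, p ω * ur astar ω :=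
    fun a => hastar' a (Finset.mem_univ a)
  have hσstarK : IsKernel (fun (_ : Ω) (a : A) => if a = astar then (1:ℝ) else 0) :=
    isKernel_det fun _ => astar
  have hσstar_star :
      expPayoff p ur (fun (_ : Ω) (a : A) => if a = astar then (1:ℝ) else 0) tauStar
      = ∑ ω, p ω * ur astar ω := by
    rw [expPayoff_constExp]
    rw [Finset.sum_eq_single astar]
    · simp [tauStar]
    · intro b _ hb
      simp [tauStar, hb]
    · intro hmem
      exact absurd (Finset.mem_univ astar) hmem
  have hσstarOb : Obedient p ur (fun (_ : Ω) (a : A) => if a = astar then (1:ℝ) else 0) := by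
    intro τ hτ
    rw [expPayoff_constExp, hσstar_star]
    calc ∑ a, τ astar a * ∑ ω, p ω * ur a ω
        ≤ ∑ a, τ astar a * ∑ ω, p ω * ur astar ω := by
          refine Finset.sum_le_sum fun a _ => ?_
          exact mul_le_mul_of_nonneg_left (hastar a) (hτ.1 astar a)
      _ = (∑ a, τ astar a) * ∑ ω, p ω * ur astar ω := by rw [← Finset.sum_mul]
      _ = ∑ ω, p ω * ur astar ω := by rw [hτ.2 astar, one_mul]
  -- receiver floor R for obedient experiments
  have hconstK : IsKernel (fun (_ : A) (a : A) => if a = astar then (1:ℝ) else 0) :=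
    isKernel_det fun _ => astar
  have hRle : ∀ ρ : Ω → A → ℝ, IsKernel ρ → Obedient p ur ρ →
      (∑ ω, p ω * ur astar ω) ≤ expPayoff p ur ρ tauStar := by
    intro ρ hρK hρOb
    have h1 := hρOb _ hconstK
    rw [expPayoff_constStrat p ur ρ hρK astar] at h1
    exact h1
  -- receiver floor for σ̄ via Jensen and ambiguous obedience
  have hwbarR : (∑ ω, p ω * ur astar ω)
      ≤ expPayoff p ur (fun ω a => ∑ θ, μ θ * σ θ ω a) tauStar := by
    have h1 := hobed _ hconstK
    have h2 : ∀ θ : Θ,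
        expPayoff p ur (σ θ) (fun (_ : A) (a : A) => if a = astar then (1:ℝ) else 0)
        = ∑ ω, p ω * ur astar ω :=
      fun θ => expPayoff_constStrat p ur (σ θ) (hσ θ) astar
    rw [Finset.sum_congr rfl fun θ _ => by rw [h2 θ]] at h1
    have h3 : ∑ θ, μ θ * φr (∑ ω, p ω * ur astar ω) = φr (∑ ω, p ω * ur astar ω) := by
      rw [← Finset.sum_mul, hμ1, one_mul]
    rw [h3] at h1
    have h4 := jens φr hφr.2.1 fun θ => expPayoff p ur (σ θ) tauStar
    have h5 : φr (∑ ω, p ω * ur astar ω)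
        ≤ φr (∑ θ, μ θ * expPayoff p ur (σ θ) tauStar) := by linarith
    have h6 := hφr.1.le_iff_le.mp h5
    rw [hbar_eq ur tauStar]
    exact h6
  -- name the basic scalar c (receiver's gain from τ̂ at σ̄)
  obtain ⟨c, hc⟩ : ∃ c : ℝ, c = expPayoff p ur (fun ω a => ∑ θ, μ θ * σ θ ω a)
      (fun m a => if a = f m then (1:ℝ) else 0)
      - expPayoff p ur (fun ω a => ∑ θ, μ θ * σ θ ω a) tauStar := ⟨_, rfl⟩
  have hcpos : 0 < c := by rw [hc]; linarith [hchat]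
  -- the obedient mixed experiment K
  obtain ⟨K, hK⟩ : ∃ k : Ω → A → ℝ, k = fun ω a =>
      (1/3 : ℝ) * (∑ m, (∑ θ, μ θ * σ θ ω m) * (if a = f m then (1:ℝ) else 0))
      + (2/3 : ℝ) * ((1/2 : ℝ) * (∑ θ,
          (μ θ * deriv φr (expPayoff p ur (σ θ) tauStar)
            / (∑ θ', μ θ' * deriv φr (expPayoff p ur (σ θ') tauStar))) * σ θ ω a)
        + (1/2 : ℝ) * (if a = astar then (1:ℝ) else 0)) := ⟨_, rfl⟩
  have hKK : IsKernel K := by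
    rw [hK]
    exact isKernel_mix2 _ _ (by norm_num) (by norm_num) (by norm_num) hσhatK
      (isKernel_mix2 _ _ (by norm_num) (by norm_num) (by norm_num) hGK hσstarK)
  have hKOb : Obedient p ur K := by
    rw [hK]
    exact obedient_mix2 p ur _ _ (by norm_num) (by norm_num) hσhatOb
      (obedient_mix2 p ur _ _ (by norm_num) (by norm_num) hGOb hσstarOb)
  have hK_pay : ∀ (v : A → Ω → ℝ) (τ : A → A → ℝ),
      expPayoff p v K τ
      = (1/3 : ℝ) * expPayoff p v (fun ω a => ∑ m, (∑ θ, μ θ * σ θ ω m)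
            * (if a = f m then (1:ℝ) else 0)) τ
        + (2/3 : ℝ) * ((1/2 : ℝ) * expPayoff p v (fun ω a => ∑ θ,
              (μ θ * deriv φr (expPayoff p ur (σ θ) tauStar)
                / (∑ θ', μ θ' * deriv φr (expPayoff p ur (σ θ') tauStar))) * σ θ ω a) τ
          + (1/2 : ℝ) * expPayoff p v (fun (_ : Ω) (a : A) => if a = astar then (1:ℝ) else 0) τ) := by
    intro v τ
    rw [hK, expPayoff_mix2, expPayoff_mix2]
  -- receiver value of K
  have hwK_ge : (∑ ω, p ω * ur astar ω) + (1/3 : ℝ) * c ≤ expPayoff p ur K tauStar := by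
    have e1 := hK_pay ur tauStar
    have e2 := hσhat_star ur
    have e3 := hσstar_star
    have e4 : (∑ ω, p ω * ur astar ω) ≤ expPayoff p ur (fun ω a => ∑ θ,
        (μ θ * deriv φr (expPayoff p ur (σ θ) tauStar)
          / (∑ θ', μ θ' * deriv φr (expPayoff p ur (σ θ') tauStar))) * σ θ ω a) tauStar :=
      hRle _ hGK hGOb
    linarith [hwbarR, hc, e1, e2, e3, e4]
  -- sender value of K
  have hsK_le : expPayoff p us K tauStar ≤ usBP := husBP.2 ⟨K, hKK, hKOb, rfl⟩
  have hqK : expPayoff p ur K (fun m a => if a = f m then (1:ℝ) else 0)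
      ≤ expPayoff p ur K tauStar := hKOb _ hτhatK
  -- choose δ
  obtain ⟨δ, hδ⟩ : ∃ d : ℝ, d = (1/2 : ℝ) * min
      ((expPayoff p us (fun ω a => ∑ θ, μ θ * σ θ ω a) tauStar - usBP)
        / (expPayoff p us (fun ω a => ∑ θ, μ θ * σ θ ω a) tauStar - usBP
            + (usBP - expPayoff p us K tauStar) + 1))
      (c / (c + (expPayoff p ur K tauStar
            - expPayoff p ur K (fun m a => if a = f m then (1:ℝ) else 0)) + 1)) := ⟨_, rfl⟩
  obtain ⟨hδpos, hδhalf, hδ1, hδ2⟩ := delta_bounds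
    (by linarith [hsbar_gt] :
      0 < expPayoff p us (fun ω a => ∑ θ, μ θ * σ θ ω a) tauStar - usBP)
    (by linarith [hsK_le] : 0 ≤ usBP - expPayoff p us K tauStar)
    hcpos
    (by linarith [hqK] : 0 ≤ expPayoff p ur K tauStar
      - expPayoff p ur K (fun m a => if a = f m then (1:ℝ) else 0))
    hδ
  -- choose ε
  obtain ⟨ε, hε⟩ : ∃ e : ℝ, e = δ * c
      / (6 * (expPayoff p ur K tauStar - (∑ ω, p ω * ur astar ω)) + 1) := ⟨_, rfl⟩
  have hu3 : c/3 ≤ expPayoff p ur K tauStar - (∑ ω, p ω * ur astar ω) := by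
    linarith [hwK_ge]
  obtain ⟨hεpos, hεlt1, hεbnd⟩ := eps_bounds hcpos hδpos hδhalf hu3 hε
  -- the two experiments
  refine ⟨fun ω a => (1 - δ) * (∑ θ, μ θ * σ θ ω a) + δ * K ω a,
    fun ω a => (1 - ε) * (if a = astar then (1:ℝ) else 0) + ε * K ω a,
    ?_, ?_, ?_, ?_, ?_, ?_, ?_⟩
  · exact isKernel_mix2 _ _ (by linarith) hδpos.le (by ring) hσbarK hKK
  · exact isKernel_mix2 _ _ (by linarith) hεpos.le (by ring) hσstarK hKK
  ·
    -- Pareto ranked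
    left
    constructor
    · -- sender
      have hσ2Ob : Obedient p ur (fun ω a =>
          (1 - ε) * (if a = astar then (1:ℝ) else 0) + ε * K ω a) :=
        obedient_mix2 p ur _ _ (by linarith) hεpos.le hσstarOb hKOb
      have hσ2K : IsKernel (fun ω a =>
          (1 - ε) * (if a = astar then (1:ℝ) else 0) + ε * K ω a) :=
        isKernel_mix2 _ _ (by linarith) hεpos.le (by ring) hσstarK hKK
      have hs2 : expPayoff p us (fun ω a =>
          (1 - ε) * (if a = astar then (1:ℝ) else 0) + ε * K ω a) tauStar ≤ usBP :=
        husBP.2 ⟨_, hσ2K, hσ2Ob, rfl⟩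
      have hs1 : usBP < expPayoff p us (fun ω a =>
          (1 - δ) * (∑ θ, μ θ * σ θ ω a) + δ * K ω a) tauStar := by
        rw [expPayoff_mix2]
        linarith [hδ1]
      linarith
    · -- receiver
      rw [expPayoff_mix2, expPayoff_mix2, hσstar_star]
      have f1 : (1 - δ) * (∑ ω, p ω * ur astar ω)
          ≤ (1 - δ) * expPayoff p ur (fun ω a => ∑ θ, μ θ * σ θ ω a) tauStar :=
        mul_le_mul_of_nonneg_left hwbarR (by linarith)
      have f3 : δ * (c/3) ≤ δ * (expPayoff p ur K tauStar - (∑ ω, p ω * ur astar ω)) :=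
        mul_le_mul_of_nonneg_left hu3 hδpos.le
      linarith [hεbnd, f1, f3, hσstar_star]
  · -- supports coincide
    intro ω
    ext a
    simp only [Set.mem_setOf_eq]
    rw [pos_mix_iff (by linarith : (0:ℝ) < 1 - δ) hδpos (hσbarK.1 ω a) (hKK.1 ω a),
      pos_mix_iff (by linarith : (0:ℝ) < 1 - ε) hεpos (hσstarK.1 ω a) (hKK.1 ω a)]
    have hKiff : 0 < K ω a ↔ (0 < ∑ m, (∑ θ, μ θ * σ θ ω m)
        * (if a = f m then (1:ℝ) else 0))
        ∨ ((0 < ∑ θ, (μ θ * deriv φr (expPayoff p ur (σ θ) tauStar)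
            / (∑ θ', μ θ' * deriv φr (expPayoff p ur (σ θ') tauStar))) * σ θ ω a)
          ∨ 0 < (if a = astar then (1:ℝ) else 0)) := by
      simp only [hK]
      rw [pos_mix_iff (by norm_num : (0:ℝ) < 1/3) (by norm_num : (0:ℝ) < 2/3)
        (hσhatK.1 ω a) (add_nonneg (mul_nonneg (by norm_num) (hGK.1 ω a))
          (mul_nonneg (by norm_num) (hσstarK.1 ω a)))]
      rw [pos_mix_iff (by norm_num : (0:ℝ) < 1/2) (by norm_num : (0:ℝ) < 1/2)
        (hGK.1 ω a) (hσstarK.1 ω a)]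
    rw [hKiff, hsuppG ω a]
    tauto
  · -- sender beats the Bayesian optimum
    rw [expPayoff_mix2]
    linarith [hδ1]
  · exact obedient_mix2 p ur _ _ (by linarith) hεpos.le hσstarOb hKOb
  · -- σ1 is not obedient
    intro hob
    have h1 := hob _ hτhatK
    rw [expPayoff_mix2, expPayoff_mix2] at h1
    have hmul : δ * c = δ * expPayoff p ur (fun ω a => ∑ θ, μ θ * σ θ ω a)
        (fun m a => if a = f m then (1:ℝ) else 0)
        - δ * expPayoff p ur (fun ω a => ∑ θ, μ θ * σ θ ω a) tauStar := by
      rw [hc]; ring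
    linarith [hδ2, hc, hmul, h1]
end

section
/- Sufficient condition for benefit from ambiguous communication: Let σ^BP be an obedient experiment with u_s(σ^BP, τ*) = u_s^BP. If there exists a Pareto-ranked splitting (σ̄, σ̲, λ) of σ^BP such that ρ^{φ_s,u_s}((σ̄, σ̲), λ) < μ̄ − λ, where μ̄ = λφ_r'(u_r(σ̲, τ*)) / [λφ_r'(u_r(σ̲, τ*)) + (1−λ)φ_r'(u_r(σ̄, τ*))], then there exists an obedient ambiguous experiment (σ, μ) with U_s(σ, μ, τ*) > u_s^BP. -/
open Finset

/-- Tangent line bound for concave differentiable functions. -/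
lemma concave_tangent {φ : ℝ → ℝ} (hc : ConcaveOn ℝ Set.univ φ) (hd : Differentiable ℝ φ)
    (x y : ℝ) : φ y ≤ φ x + deriv φ x * (y - x) := by
  rcases lt_trichotomy x y with h | rfl | h
  · have := hc.slope_le_deriv (Set.mem_univ x) (Set.mem_univ y) h (hd x)
    rw [slope_def_field] at this
    have hyx : (0:ℝ) < y - x := by linarith
    rw [div_le_iff₀ hyx] at this
    linarith
  · simp
  · have := hc.deriv_le_slope (Set.mem_univ y) (Set.mem_univ x) h (hd x)
    rw [slope_def_field] at this
    have hxy : (0:ℝ) < x - y := by linarith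
    rw [le_div_iff₀ hxy] at this
    nlinarith

lemma deriv_pos_of_concave {φ : ℝ → ℝ} (hm : StrictMono φ) (hc : ConcaveOn ℝ Set.univ φ)
    (hd : Differentiable ℝ φ) (x : ℝ) : 0 < deriv φ x := by
  have h := concave_tangent hc hd x (x + 1)
  have h2 := hm (show x < x + 1 by linarith)
  simp at h
  linarith

lemma expPayoff_mix {Ω A : Type*} [Fintype Ω] [Fintype A]
    (p : Ω → ℝ) (u : A → Ω → ℝ) (lam : ℝ) (σ1 σ2 : Ω → A → ℝ) (τ : A → A → ℝ) :
    expPayoff p u (mixExp lam σ1 σ2) τ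
      = lam * expPayoff p u σ1 τ + (1 - lam) * expPayoff p u σ2 τ := by
  simp only [expPayoff, mixExp, Finset.mul_sum, ← Finset.sum_add_distrib]
  exact Finset.sum_congr rfl fun ω _ => Finset.sum_congr rfl fun m _ =>
    Finset.sum_congr rfl fun a _ => by ring

/-- Corollary 2: if an optimal Bayesian persuasion experiment `σBP` admits
a Pareto-ranked splitting `(σbar, σlo, lam)` (with `σbar` the better experiment) whose
sender probability premium is `< μbar − lam` for
`μbar = lam φr'(u_r(σlo,τ*)) / (lam φr'(u_r(σlo,τ*)) + (1−lam) φr'(u_r(σbar,τ*)))`, then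
ambiguous communication benefits the sender: there is an obedient ambiguous experiment
with `U_s > u_s^BP` (stated via the strictly increasing `φs`). -/
theorem sufficient_condition_for_benefit
    {Ω A : Type*} [Fintype Ω] [Fintype A] [DecidableEq A]
    (p : Ω → ℝ) (hp : IsProb p) (us ur : A → Ω → ℝ)
    (φs φr : ℝ → ℝ) (hφs : SmoothIndex φs) (hφr : SmoothIndex φr)
    (usBP : ℝ)
    (husBP : IsGreatest {x : ℝ | ∃ σ0 : Ω → A → ℝ,
      IsKernel σ0 ∧ Obedient p ur σ0 ∧ x = expPayoff p us σ0 tauStar} usBP)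
    (σBP : Ω → A → ℝ) (hσBP : IsKernel σBP) (hobedBP : Obedient p ur σBP)
    (hval : expPayoff p us σBP tauStar = usBP)
    (σbar σlo : Ω → A → ℝ) (lam : ℝ)
    (hsplit : ParetoRankedSplitting p us ur σbar σlo lam σBP)
    (hs : expPayoff p us σlo tauStar < expPayoff p us σbar tauStar)
    (μbar : ℝ)
    (hμbar : μbar = lam * deriv φr (expPayoff p ur σlo tauStar) /
      (lam * deriv φr (expPayoff p ur σlo tauStar) +
        (1 - lam) * deriv φr (expPayoff p ur σbar tauStar)))
    (hprem : probPremium p us φs σbar σlo lam < μbar - lam) :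
    ∃ (n : ℕ) (σ : Fin n → Ω → A → ℝ) (μ : Fin n → ℝ),
      (∀ j, IsKernel (σ j)) ∧ IsProb μ ∧ AmbObedient φr p ur σ μ ∧
      φs usBP < ∑ j, μ j * φs (expPayoff p us (σ j) tauStar) := by
  obtain ⟨hkb, hkl, hlam, hmix, _⟩ := hsplit
  obtain ⟨hφsm, hφsc, hφsd⟩ := hφs
  obtain ⟨hφrm, hφrc, hφrd⟩ := hφr
  set b := expPayoff p ur σbar tauStar with hb
  set l := expPayoff p ur σlo tauStar with hl
  set db := deriv φr b with hdbdef
  set dl := deriv φr l with hdldef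
  have hdb : 0 < db := deriv_pos_of_concave hφrm hφrc hφrd b
  have hdl : 0 < dl := deriv_pos_of_concave hφrm hφrc hφrd l
  obtain ⟨hlam0, hlam1⟩ := hlam
  have hD : 0 < lam * dl + (1 - lam) * db := by nlinarith
  have hμ0 : 0 < μbar := by
    rw [hμbar]; positivity
  have hμ1 : μbar < 1 := by
    rw [hμbar, div_lt_one hD]; nlinarith
  refine ⟨2, ![σbar, σlo], ![μbar, 1 - μbar], ?_, ?_, ?_, ?_⟩
  · intro j; fin_cases j
    · exact hkb
    · exact hkl
  · refine ⟨fun θ => ?_, by simp [Fin.sum_univ_two]⟩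
    fin_cases θ <;> simp <;> linarith
  · intro τ hτ
    simp only [Fin.sum_univ_two, Matrix.cons_val_zero, Matrix.cons_val_one, Matrix.head_cons]
    have t1 : φr (expPayoff p ur σbar τ) ≤ φr b + db * (expPayoff p ur σbar τ - b) :=
      concave_tangent hφrc hφrd b _
    have t2 : φr (expPayoff p ur σlo τ) ≤ φr l + dl * (expPayoff p ur σlo τ - l) :=
      concave_tangent hφrc hφrd l _
    have hob := hobedBP τ hτ
    rw [← hmix, expPayoff_mix, expPayoff_mix] at hob
    have key : μbar * db * (expPayoff p ur σbar τ - b)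
        + (1 - μbar) * dl * (expPayoff p ur σlo τ - l)
        = (db * dl / (lam * dl + (1 - lam) * db)) *
          ((lam * expPayoff p ur σbar τ + (1 - lam) * expPayoff p ur σlo τ)
            - (lam * b + (1 - lam) * l)) := by
      rw [hμbar]; field_simp; ring
    have key2 : μbar * db * (expPayoff p ur σbar τ - b)
        + (1 - μbar) * dl * (expPayoff p ur σlo τ - l) ≤ 0 := by
      rw [key]
      exact mul_nonpos_of_nonneg_of_nonpos (by positivity) (by linarith)
    nlinarith [mul_le_mul_of_nonneg_left t1 hμ0.le,
      mul_le_mul_of_nonneg_left t2 (by linarith : (0:ℝ) ≤ 1 - μbar)]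
  · simp only [Fin.sum_univ_two, Matrix.cons_val_zero, Matrix.cons_val_one, Matrix.head_cons]
    have hdpos : 0 < φs (expPayoff p us σbar tauStar) - φs (expPayoff p us σlo tauStar) :=
      sub_pos.mpr (hφsm hs)
    have hpp : probPremium p us φs σbar σlo lam
        = (φs usBP - lam * φs (expPayoff p us σbar tauStar)
            - (1 - lam) * φs (expPayoff p us σlo tauStar)) /
          (φs (expPayoff p us σbar tauStar) - φs (expPayoff p us σlo tauStar)) := by
      unfold probPremium
      rw [hmix, hval]
    rw [hpp, div_lt_iff₀ hdpos] at hprem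
    nlinarith [hprem]
end

section
/- Spanning condition for existence of a Pareto-ranked splitting: Let σ* be any experiment and for each ω ∈ Ω fix an action a_ω in the support of σ*(·|ω). If the set of vectors { (p(ω)(u_s(a,ω) − u_s(a_ω,ω)), p(ω)(u_r(a,ω) − u_r(a_ω,ω))) : ω ∈ Ω, a ∈ support of σ*(·|ω) } spans ℝ², then there exists a Pareto-ranked splitting (σ̄, σ̲, λ) of σ*. -/
open Finset

/-- Auxiliary: expected payoff under the obedient strategy simplifies. -/
lemma expPayoff_tauStar_eq {Ω A : Type*} [Fintype Ω] [Fintype A] [DecidableEq A]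
    (p : Ω → ℝ) (u : A → Ω → ℝ) (σ : Ω → A → ℝ) :
    expPayoff p u σ tauStar = ∑ ω, ∑ m, p ω * σ ω m * u m ω := by
  unfold expPayoff tauStar
  refine Finset.sum_congr rfl fun ω _ => Finset.sum_congr rfl fun m _ => ?_
  rw [Finset.sum_eq_single m]
  · simp
  · intro b _ hb; simp [hb]
  · simp

/-- Proposition 3, spanning condition: fix for each `ω` an action `aω ω`
in the support of `σstar(·|ω)`.  If the vectors
`(p(ω)(u_s(a,ω) − u_s(aω ω,ω)), p(ω)(u_r(a,ω) − u_r(aω ω,ω)))`, over `ω ∈ Ω` and `a` in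
the support of `σstar(·|ω)`, span `ℝ²`, then `σstar` admits a Pareto-ranked splitting. -/
theorem spanning_implies_pareto_ranked_splitting
    {Ω A : Type*} [Fintype Ω] [Fintype A] [DecidableEq A]
    (p : Ω → ℝ) (hp : IsProb p) (us ur : A → Ω → ℝ)
    (σstar : Ω → A → ℝ) (hσstar : IsKernel σstar)
    (aω : Ω → A) (haω : ∀ ω, 0 < σstar ω (aω ω))
    (hspan : Submodule.span ℝ
      {v : ℝ × ℝ | ∃ ω a, 0 < σstar ω a ∧
        v = (p ω * (us a ω - us (aω ω) ω), p ω * (ur a ω - ur (aω ω) ω))} = ⊤) :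
    ∃ (σbar σlo : Ω → A → ℝ) (lam : ℝ),
      ParetoRankedSplitting p us ur σbar σlo lam σstar := by
  classical
  -- nonemptiness
  have hΩ : Nonempty Ω := by
    by_contra h
    rw [not_nonempty_iff] at h
    have := hp.2
    simp [Finset.univ_eq_empty] at this
  obtain ⟨ω0⟩ := hΩ
  have hA : Nonempty A := ⟨aω ω0⟩
  -- extract a finite combination representing (1,1)
  have h11 : ((1 : ℝ), (1 : ℝ)) ∈ Submodule.span ℝ
      {v : ℝ × ℝ | ∃ ω a, 0 < σstar ω a ∧
        v = (p ω * (us a ω - us (aω ω) ω), p ω * (ur a ω - ur (aω ω) ω))} := by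
    rw [hspan]; trivial
  rw [Submodule.mem_span_set'] at h11
  obtain ⟨n, c, v, hv⟩ := h11
  have hprop : ∀ i : Fin n, ∃ ωa : Ω × A, 0 < σstar ωa.1 ωa.2 ∧
      (v i : ℝ × ℝ) = (p ωa.1 * (us ωa.2 ωa.1 - us (aω ωa.1) ωa.1),
        p ωa.1 * (ur ωa.2 ωa.1 - ur (aω ωa.1) ωa.1)) := by
    intro i
    obtain ⟨ω, a, h1, h2⟩ := (v i).2
    exact ⟨(ω, a), h1, h2⟩
  choose w hw1 hw2 using hprop
  set ωi : Fin n → Ω := fun i => (w i).1 with hωi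
  set ai : Fin n → A := fun i => (w i).2 with hai
  -- the perturbation direction
  set D : Ω → A → ℝ := fun ω a => ∑ i, c i *
      ((if ω = ωi i ∧ a = ai i then (1:ℝ) else 0) -
       (if ω = ωi i ∧ a = aω (ωi i) then (1:ℝ) else 0)) with hD
  have hDrow : ∀ ω, ∑ a, D ω a = 0 := by
    intro ω
    rw [hD]
    rw [Finset.sum_comm]
    refine Finset.sum_eq_zero fun i _ => ?_
    rw [← Finset.mul_sum]
    rcases eq_or_ne ω (ωi i) with h | h <;> simp [h, Finset.sum_sub_distrib]
  have hDzero : ∀ ω a, σstar ω a = 0 → D ω a = 0 := by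
    intro ω a hσ
    rw [hD]
    refine Finset.sum_eq_zero fun i _ => ?_
    have h1 : ¬(ω = ωi i ∧ a = ai i) := by
      rintro ⟨rfl, rfl⟩
      exact absurd hσ (ne_of_gt (hw1 i))
    have h2 : ¬(ω = ωi i ∧ a = aω (ωi i)) := by
      rintro ⟨rfl, rfl⟩
      exact absurd hσ (ne_of_gt (haω _))
    simp [h1, h2]
  -- payoff effect of the direction
  have hDpay : ∀ u : A → Ω → ℝ, ∑ ω, ∑ a, p ω * D ω a * u a ω =
      ∑ i, c i * (p (ωi i) * (u (ai i) (ωi i) - u (aω (ωi i)) (ωi i))) := by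
    intro u
    have key : ∀ ω, ∑ a, p ω * D ω a * u a ω =
        ∑ i, c i * ((if ω = ωi i then p ω * u (ai i) ω else 0) -
          (if ω = ωi i then p ω * u (aω (ωi i)) ω else 0)) := by
      intro ω
      calc ∑ a, p ω * D ω a * u a ω
          = ∑ a, ∑ i, c i * (p ω * ((if ω = ωi i ∧ a = ai i then (1:ℝ) else 0) -
              (if ω = ωi i ∧ a = aω (ωi i) then (1:ℝ) else 0)) * u a ω) := by
            refine Finset.sum_congr rfl fun a _ => ?_
            simp only [hD, Finset.sum_mul, Finset.mul_sum]
            exact Finset.sum_congr rfl fun i _ => by ring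
        _ = ∑ i, ∑ a, c i * (p ω * ((if ω = ωi i ∧ a = ai i then (1:ℝ) else 0) -
              (if ω = ωi i ∧ a = aω (ωi i) then (1:ℝ) else 0)) * u a ω) := Finset.sum_comm
        _ = ∑ i, c i * ((if ω = ωi i then p ω * u (ai i) ω else 0) -
              (if ω = ωi i then p ω * u (aω (ωi i)) ω else 0)) := by
            refine Finset.sum_congr rfl fun i _ => ?_
            rw [← Finset.mul_sum]
            congr 1
            rcases eq_or_ne ω (ωi i) with h | h
            · subst h
              simp [sub_mul, mul_sub, ite_mul, mul_ite, Finset.sum_sub_distrib,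
                Finset.sum_ite_eq']
            · simp [h]
    rw [Finset.sum_congr rfl fun ω _ => key ω, Finset.sum_comm]
    refine Finset.sum_congr rfl fun i _ => ?_
    rw [← Finset.mul_sum]
    congr 1
    simp [Finset.sum_sub_distrib, Finset.sum_ite_eq', mul_sub]
  -- sender and receiver payoff effects are both 1
  have hsum1 : (∑ i, c i • (v i : ℝ × ℝ)) = ((1:ℝ), (1:ℝ)) := hv
  have hDus : ∑ ω, ∑ a, p ω * D ω a * us a ω = 1 := by
    rw [hDpay]
    have := congrArg Prod.fst hsum1
    simp only [Prod.fst_sum, Prod.smul_fst, smul_eq_mul] at this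
    rw [← this]
    refine Finset.sum_congr rfl fun i _ => ?_
    rw [hw2 i]
  have hDur : ∑ ω, ∑ a, p ω * D ω a * ur a ω = 1 := by
    rw [hDpay]
    have := congrArg Prod.snd hsum1
    simp only [Prod.snd_sum, Prod.smul_snd, smul_eq_mul] at this
    rw [← this]
    refine Finset.sum_congr rfl fun i _ => ?_
    rw [hw2 i]
  -- choose a small ε
  have hPA : Nonempty (Ω × A) := ⟨(ω0, aω ω0)⟩
  have hne : (Finset.univ : Finset (Ω × A)).Nonempty := Finset.univ_nonempty
  set ε : ℝ := Finset.univ.inf' hne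
      (fun q : Ω × A => if D q.1 q.2 = 0 then 1 else σstar q.1 q.2 / |D q.1 q.2|) with hε
  have hεpos : 0 < ε := by
    rw [hε, Finset.lt_inf'_iff]
    intro q _
    rcases eq_or_ne (D q.1 q.2) 0 with h | h
    · simp [h]
    · have hσpos : 0 < σstar q.1 q.2 := by
        rcases lt_or_eq_of_le (hσstar.1 q.1 q.2) with h' | h'
        · exact h'
        · exact absurd (hDzero q.1 q.2 h'.symm) h
      simp only [h, if_neg, if_false]
      exact div_pos hσpos (abs_pos.mpr h)
  have hbound : ∀ ω a, ε * |D ω a| ≤ σstar ω a := by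
    intro ω a
    rcases eq_or_ne (D ω a) 0 with h | h
    · simp [h, hσstar.1 ω a]
    · have hσpos : 0 < σstar ω a := by
        rcases lt_or_eq_of_le (hσstar.1 ω a) with h' | h'
        · exact h'
        · exact absurd (hDzero ω a h'.symm) h
      have hle : ε ≤ σstar ω a / |D ω a| := by
        have := Finset.inf'_le (f := fun q : Ω × A =>
          if D q.1 q.2 = 0 then 1 else σstar q.1 q.2 / |D q.1 q.2|)
          (Finset.mem_univ (ω, a))
        simpa only [h, if_false, ↓reduceIte] using this
      calc ε * |D ω a| ≤ (σstar ω a / |D ω a|) * |D ω a| :=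
            mul_le_mul_of_nonneg_right hle (abs_nonneg _)
        _ = σstar ω a := by field_simp
  -- the two experiments
  refine ⟨fun ω a => σstar ω a + ε * D ω a, fun ω a => σstar ω a - ε * D ω a, 1/2,
    ?_, ?_, ?_, ?_, ?_⟩
  · constructor
    · intro ω a
      have h1 := hbound ω a
      have h2 : ε * -|D ω a| ≤ ε * D ω a :=
        mul_le_mul_of_nonneg_left (neg_abs_le (D ω a)) hεpos.le
      have h3 : ε * -|D ω a| = -(ε * |D ω a|) := by ring
      show 0 ≤ σstar ω a + ε * D ω a
      linarith
    · intro ω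
      rw [Finset.sum_add_distrib, hσstar.2 ω, ← Finset.mul_sum, hDrow ω]
      ring
  · constructor
    · intro ω a
      have h1 := hbound ω a
      have h2 : ε * D ω a ≤ ε * |D ω a| :=
        mul_le_mul_of_nonneg_left (le_abs_self (D ω a)) hεpos.le
      show 0 ≤ σstar ω a - ε * D ω a
      linarith
    · intro ω
      rw [Finset.sum_sub_distrib, hσstar.2 ω, ← Finset.mul_sum, hDrow ω]
      ring
  · constructor <;> norm_num
  · funext ω a
    simp only [mixExp]
    ring
  · -- Pareto ranking
    have hsplit : ∀ (u : A → Ω → ℝ) (s : ℝ),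
        expPayoff p u (fun ω a => σstar ω a + s * D ω a) tauStar =
          expPayoff p u σstar tauStar + s * ∑ ω, ∑ a, p ω * D ω a * u a ω := by
      intro u s
      rw [expPayoff_tauStar_eq, expPayoff_tauStar_eq, Finset.mul_sum, ← Finset.sum_add_distrib]
      refine Finset.sum_congr rfl fun ω _ => ?_
      rw [Finset.mul_sum, ← Finset.sum_add_distrib]
      exact Finset.sum_congr rfl fun a _ => by ring
    have hbar_us := hsplit us ε
    have hlo_us : expPayoff p us (fun ω a => σstar ω a - ε * D ω a) tauStar =
        expPayoff p us σstar tauStar + (-ε) * ∑ ω, ∑ a, p ω * D ω a * us a ω := by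
      have := hsplit us (-ε)
      simpa [neg_mul, sub_eq_add_neg] using this
    have hbar_ur := hsplit ur ε
    have hlo_ur : expPayoff p ur (fun ω a => σstar ω a - ε * D ω a) tauStar =
        expPayoff p ur σstar tauStar + (-ε) * ∑ ω, ∑ a, p ω * D ω a * ur a ω := by
      have := hsplit ur (-ε)
      simpa [neg_mul, sub_eq_add_neg] using this
    left
    constructor
    · rw [hbar_us, hlo_us, hDus]; linarith
    · rw [hbar_ur, hlo_ur, hDur]; linarith
end
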